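/- arXiv:1409.8407 — 4 statements merged into one kernel-verified Lean document; each statement's English description precedes it below -/
import Mathlib

section
/- Let f : ℝⁿ → ℝⁿ be Lipschitz with constant L ≥ 0, A : ℝⁿ → ℝⁿ a linear map, x₀ ∈ ℝⁿ, T > 0 and M > 0. Then there exists a constant C > 0 (depending only on f, A, x₀, T, M) such that: for every T₀ ∈ (0,1], every measurable T₀-periodic function p : ℝ → ℝ with |p(t)| ≤ M for all t and mean value p*, every solution x of the switched system on [0,T] and every solution y of the averaged system (with parameter p*) on [0,T], one has ‖x(t) − y(t)‖ ≤ C·T₀ for all t ∈ [0,T]. -/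
open Set MeasureTheory intervalIntegral Real

lemma myIntInt {E : Type*} [NormedAddCommGroup E] {g : ℝ → E} {a b C : ℝ}
    (hm : AEStronglyMeasurable g (volume.restrict (Set.uIoc a b)))
    (hb : ∀ u ∈ Set.uIoc a b, ‖g u‖ ≤ C) : IntervalIntegrable g volume a b := by
  rw [intervalIntegrable_iff]
  simp only [Set.uIoc] at hm hb ⊢
  refine ⟨hm, HasFiniteIntegral.mono' (g := fun _ => C) ?_ ?_⟩
  · exact (hasFiniteIntegral_const C)
  · exact (ae_restrict_iff' measurableSet_uIoc).2 (.of_forall hb)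

lemma gb_mono {δ K ε : ℝ} (hδ : 0 ≤ δ) (hK : 0 ≤ K) (hε : 0 ≤ ε) {s u : ℝ}
    (hs : 0 ≤ s) (hsu : s ≤ u) : gronwallBound δ K ε s ≤ gronwallBound δ K ε u := by
  rcases eq_or_lt_of_le hK with h0 | h0
  · simp only [gronwallBound, ← h0, if_pos]
    nlinarith
  · simp only [gronwallBound, if_neg h0.ne']
    have h1 : Real.exp (K * s) ≤ Real.exp (K * u) := by
      apply Real.exp_le_exp.2; nlinarith
    have h2 : (0:ℝ) < K := h0
    have h3 : 0 ≤ ε / K := div_nonneg hε h2.le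
    nlinarith

lemma gb_nonneg {δ K ε : ℝ} (hδ : 0 ≤ δ) (hK : 0 ≤ K) (hε : 0 ≤ ε) {u : ℝ}
    (hu : 0 ≤ u) : 0 ≤ gronwallBound δ K ε u := by
  have h := gb_mono hδ hK hε le_rfl hu
  rw [gronwallBound_x0] at h
  linarith

lemma gb_final {K ε t T : ℝ} (hK : 0 ≤ K) (hε : 0 ≤ ε) (ht : 0 ≤ t) (htT : t ≤ T) :
    K * gronwallBound 0 K ε t + ε ≤ ε * Real.exp (K * T) := by
  have hexp : Real.exp (K * t) ≤ Real.exp (K * T) := by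
    apply Real.exp_le_exp.2; nlinarith
  have h1 : (1:ℝ) ≤ Real.exp (K * T) := by
    rw [← Real.exp_zero]; apply Real.exp_le_exp.2; nlinarith
  rcases eq_or_lt_of_le hK with h0 | h0
  · simp only [gronwallBound, ← h0, if_pos, zero_mul, zero_add, Real.exp_zero, mul_one]
    exact le_rfl
  · simp only [gronwallBound, if_neg h0.ne', zero_mul, zero_add]
    have he : K * (ε / K * (Real.exp (K * t) - 1)) = ε * (Real.exp (K * t) - 1) := by
      field_simp
    rw [he]
    nlinarith [mul_le_mul_of_nonneg_left hexp hε]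

set_option maxHeartbeats 2000000 in
/-- Quantitative averaging theorem for the parameter-switching (PS) algorithm.
For `f` Lipschitz, `A` linear, there is a constant `C > 0` (depending only on
`f, A, x₀, T, M`) such that every solution of the switched system with a measurable,
bounded, `T₀`-periodic switching function of mean `p*` stays within `C·T₀` of every
solution of the averaged system on `[0, T]`. -/
theorem ps_switched_vs_averaged_quantitative
    {n : ℕ} (f : EuclideanSpace ℝ (Fin n) → EuclideanSpace ℝ (Fin n))
    (L : ℝ) (hL : 0 ≤ L) (hf : LipschitzWith L.toNNReal f)
    (A : EuclideanSpace ℝ (Fin n) →ₗ[ℝ] EuclideanSpace ℝ (Fin n))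
    (x₀ : EuclideanSpace ℝ (Fin n)) (T M : ℝ) (hT : 0 < T) (hM : 0 < M) :
    ∃ C > 0, ∀ T₀ : ℝ, T₀ ∈ Set.Ioc (0 : ℝ) 1 →
      ∀ p : ℝ → ℝ, Measurable p →
        (∀ t : ℝ, p (t + T₀) = p t) →
        (∀ t : ℝ, |p t| ≤ M) →
        ∀ pstar : ℝ, (1 / T₀) * (∫ u in (0 : ℝ)..T₀, p u) = pstar →
        ∀ x y : ℝ → EuclideanSpace ℝ (Fin n),
          x 0 = x₀ →
          (∀ t ∈ Set.Icc (0 : ℝ) T, HasDerivAt x (f (x t) + p t • A (x t)) t) →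
          y 0 = x₀ →
          (∀ t ∈ Set.Icc (0 : ℝ) T, HasDerivAt y (f (y t) + pstar • A (y t)) t) →
          ∀ t ∈ Set.Icc (0 : ℝ) T, ‖x t - y t‖ ≤ C * T₀ := by
  set Ac : EuclideanSpace ℝ (Fin n) →L[ℝ] EuclideanSpace ℝ (Fin n) :=
    LinearMap.toContinuousLinearMap A with hAcdef
  have hAc : ∀ v, A v = Ac v := fun v => rfl
  clear_value Ac
  set K : ℝ := L + M * ‖Ac‖ with hKdef
  have hK : 0 ≤ K := by rw [hKdef]; positivity
  clear_value K
  set R : ℝ := gronwallBound ‖x₀‖ K ‖f 0‖ T with hRdef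
  have hR : 0 ≤ R := hRdef ▸ gb_nonneg (norm_nonneg _) hK (norm_nonneg _) hT.le
  clear_value R
  set R' : ℝ := ‖f 0‖ + K * R with hR'def
  have hR' : 0 ≤ R' := by rw [hR'def]; positivity
  clear_value R'
  set C₁ : ℝ := 2*M*(‖Ac‖*R')*T + 2*M*(‖Ac‖*R) with hC₁def
  have hC₁ : 0 ≤ C₁ := by rw [hC₁def]; positivity
  clear_value C₁
  refine ⟨(C₁+1)*Real.exp (K*T), mul_pos (by linarith) (Real.exp_pos _), ?_⟩
  intro T₀ hT₀ p hpm hper hpbd pstar hmean x y hx0 hx' hy0 hy' t ht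
  obtain ⟨hT₀0, hT₀1⟩ := hT₀
  -- basic facts
  have hLip : ∀ v w, ‖f v - f w‖ ≤ L * ‖v - w‖ := by
    intro v w
    have := hf.dist_le_mul v w
    rwa [dist_eq_norm, dist_eq_norm, Real.coe_toNNReal L hL] at this
  have hfb : ∀ v, ‖f v‖ ≤ L * ‖v‖ + ‖f 0‖ := by
    intro v
    have h1 := hLip v 0
    have h2 := norm_sub_norm_le (f v) (f 0)
    simp only [sub_zero] at h1
    linarith
  have hcontx : ContinuousOn x (Icc 0 T) := fun u hu => ((hx' u hu).continuousAt).continuousWithinAt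
  have hconty : ContinuousOn y (Icc 0 T) := fun u hu => ((hy' u hu).continuousAt).continuousWithinAt
  -- |pstar| ≤ M
  have hpsM : |pstar| ≤ M := by
    rw [← hmean, abs_mul]
    have h1 : ‖∫ u in (0:ℝ)..T₀, p u‖ ≤ M * |T₀ - 0| :=
      intervalIntegral.norm_integral_le_of_norm_le_const fun u _ => by
        rw [Real.norm_eq_abs]; exact hpbd u
    rw [Real.norm_eq_abs] at h1
    rw [abs_of_pos (by positivity : (0:ℝ) < 1/T₀)]
    calc 1/T₀ * |∫ u in (0:ℝ)..T₀, p u| ≤ 1/T₀ * (M * T₀) := by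
          apply mul_le_mul_of_nonneg_left _ (by positivity)
          simpa [abs_of_pos hT₀0] using h1
      _ = M := by field_simp
  -- bound on averaged RHS
  have hrhs : ∀ v, ‖f v + pstar • Ac v‖ ≤ K * ‖v‖ + ‖f 0‖ := by
    intro v
    calc ‖f v + pstar • Ac v‖ ≤ ‖f v‖ + ‖pstar • Ac v‖ := norm_add_le _ _
      _ ≤ (L * ‖v‖ + ‖f 0‖) + M * (‖Ac‖ * ‖v‖) := by
          refine add_le_add (hfb v) ?_
          rw [norm_smul, Real.norm_eq_abs]
          exact mul_le_mul hpsM (Ac.le_opNorm v) (norm_nonneg _) hM.le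
      _ = K * ‖v‖ + ‖f 0‖ := by rw [hKdef]; ring
  -- bound on y
  have hyb : ∀ u ∈ Icc (0:ℝ) T, ‖y u‖ ≤ R := by
    intro u hu
    have h := norm_le_gronwallBound_of_norm_deriv_right_le (f := y)
      (f' := fun s => f (y s) + pstar • A (y s)) (δ := ‖x₀‖) (K := K) (ε := ‖f 0‖)
      hconty (fun s hs => (hy' s (Ico_subset_Icc_self hs)).hasDerivWithinAt)
      (by rw [hy0]) (fun s _ => by simpa only [hAc] using hrhs (y s)) u hu
    refine h.trans ?_
    rw [sub_zero, hRdef]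
    exact gb_mono (norm_nonneg _) hK (norm_nonneg _) hu.1 hu.2
  -- bound on y'
  have hy'b : ∀ u ∈ Icc (0:ℝ) T, ‖f (y u) + pstar • A (y u)‖ ≤ R' := by
    intro u hu
    rw [hAc]
    refine (hrhs (y u)).trans ?_
    rw [hR'def]
    nlinarith [hyb u hu]
  -- y is Lipschitz on [0,T]
  have hyLip : ∀ u ∈ Icc (0:ℝ) T, ∀ v ∈ Icc (0:ℝ) T, ‖y u - y v‖ ≤ R' * |u - v| := by
    intro u hu v hv
    have := (convex_Icc (0:ℝ) T).norm_image_sub_le_of_norm_hasDerivWithin_le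
      (f := y) (f' := fun s => f (y s) + pstar • A (y s)) (C := R')
      (fun s hs => (hy' s hs).hasDerivWithinAt) hy'b hv hu
    rwa [Real.norm_eq_abs] at this
  -- the two integrands
  set g₁ : ℝ → EuclideanSpace ℝ (Fin n) :=
    fun u => (f (x u) - f (y u)) + p u • (Ac (x u) - Ac (y u)) with hg₁def
  set g₂ : ℝ → EuclideanSpace ℝ (Fin n) := fun u => (p u - pstar) • Ac (y u) with hg₂def
  have hg₁bd : ∀ u ∈ Icc (0:ℝ) T, ‖g₁ u‖ ≤ K * ‖x u - y u‖ := by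
    intro u hu
    simp only [hg₁def]
    calc ‖(f (x u) - f (y u)) + p u • (Ac (x u) - Ac (y u))‖
        ≤ ‖f (x u) - f (y u)‖ + ‖p u • (Ac (x u) - Ac (y u))‖ := norm_add_le _ _
      _ ≤ L * ‖x u - y u‖ + M * (‖Ac‖ * ‖x u - y u‖) := by
          refine add_le_add (hLip _ _) ?_
          rw [norm_smul, Real.norm_eq_abs, ← map_sub]
          exact mul_le_mul (hpbd u) (Ac.le_opNorm _) (norm_nonneg _) hM.le
      _ = K * ‖x u - y u‖ := by rw [hKdef]; ring
  have hps2M : ∀ u : ℝ, |p u - pstar| ≤ 2 * M := by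
    intro u
    have h := norm_sub_le (p u) pstar
    simp only [Real.norm_eq_abs] at h
    linarith [hpbd u, hpsM]
  have hg₂bd : ∀ u ∈ Icc (0:ℝ) T, ‖g₂ u‖ ≤ 2*M*(‖Ac‖*R) := by
    intro u hu
    simp only [hg₂def]
    rw [norm_smul, Real.norm_eq_abs]
    have h2 : ‖Ac (y u)‖ ≤ ‖Ac‖ * R := by
      calc ‖Ac (y u)‖ ≤ ‖Ac‖ * ‖y u‖ := Ac.le_opNorm _
        _ ≤ ‖Ac‖ * R := mul_le_mul_of_nonneg_left (hyb u hu) (norm_nonneg _)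
    calc |p u - pstar| * ‖Ac (y u)‖ ≤ (2*M) * (‖Ac‖*R) :=
          mul_le_mul (hps2M u) h2 (norm_nonneg _) (by linarith [hM.le])
      _ = 2*M*(‖Ac‖*R) := by ring
  have hsub : ∀ c d : ℝ, c ∈ Icc (0:ℝ) T → d ∈ Icc (0:ℝ) T →
      Set.uIoc c d ⊆ Icc (0:ℝ) T := by
    intro c d hc hd u hu
    exact ⟨le_trans (le_min hc.1 hd.1) hu.1.le, le_trans hu.2 (max_le hc.2 hd.2)⟩
  have hint₂ : ∀ c d : ℝ, c ∈ Icc (0:ℝ) T → d ∈ Icc (0:ℝ) T →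
      IntervalIntegrable g₂ volume c d := by
    intro c d hc hd
    refine myIntInt ?_ (fun u hu => hg₂bd u (hsub c d hc hd hu))
    exact ((hpm.sub measurable_const).aestronglyMeasurable).smul
      ((Ac.continuous.comp_continuousOn (hconty.mono (hsub c d hc hd))).aestronglyMeasurable
        measurableSet_uIoc)
  obtain ⟨Bx, hBx⟩ := isCompact_Icc.exists_bound_of_continuousOn hcontx
  obtain ⟨By, hBy⟩ := isCompact_Icc.exists_bound_of_continuousOn hconty
  have hint₁ : ∀ s ∈ Icc (0:ℝ) T, IntervalIntegrable g₁ volume 0 s := by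
    intro s hs
    have hsub' := hsub 0 s (left_mem_Icc.2 hT.le) hs
    refine myIntInt (C := K * (Bx + By)) ?_ ?_
    · refine AEStronglyMeasurable.add ?_ ?_
      · exact (((hf.continuous.comp_continuousOn (hcontx.mono hsub')).sub
          (hf.continuous.comp_continuousOn (hconty.mono hsub'))).aestronglyMeasurable
          measurableSet_uIoc)
      · exact hpm.aestronglyMeasurable.smul
          (((Ac.continuous.comp_continuousOn (hcontx.mono hsub')).sub
            (Ac.continuous.comp_continuousOn (hconty.mono hsub'))).aestronglyMeasurable
            measurableSet_uIoc)
    · intro u hu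
      have hu' := hsub' hu
      refine (hg₁bd u hu').trans ?_
      have : ‖x u - y u‖ ≤ Bx + By := (norm_sub_le _ _).trans (add_le_add (hBx u hu') (hBy u hu'))
      exact mul_le_mul_of_nonneg_left this hK
  have hftc : ∀ s ∈ Icc (0:ℝ) T, x s - y s = ∫ u in (0:ℝ)..s, (g₁ u + g₂ u) := by
    intro s hs
    have hIcc : Set.uIcc (0:ℝ) s ⊆ Icc 0 T := by
      rw [Set.uIcc_of_le hs.1]; exact Icc_subset_Icc le_rfl hs.2
    have hderiv : ∀ u ∈ Set.uIcc (0:ℝ) s, HasDerivAt (fun w => x w - y w) (g₁ u + g₂ u) u := by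
      intro u hu
      have h := (hx' u (hIcc hu)).sub (hy' u (hIcc hu))
      refine h.congr_deriv ?_
      simp only [hg₁def, hg₂def, hAc, smul_sub, sub_smul]
      abel
    have h := intervalIntegral.integral_eq_sub_of_hasDerivAt hderiv
      ((hint₁ s hs).add (hint₂ 0 s (left_mem_Icc.2 hT.le) hs))
    rw [h, hx0, hy0, sub_self, sub_zero]
  have hpint : ∀ c d : ℝ, IntervalIntegrable p volume c d := fun c d =>
    myIntInt (C := M) hpm.aestronglyMeasurable
      (fun u _ => by rw [Real.norm_eq_abs]; exact hpbd u)
  -- the key bound on the oscillating integral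
  have hB : ∀ s ∈ Icc (0:ℝ) T, ‖∫ u in (0:ℝ)..s, g₂ u‖ ≤ C₁ * T₀ := by
    intro s hs
    set N : ℕ := ⌊s / T₀⌋₊ with hNdef
    have hN1 : (N:ℝ) * T₀ ≤ s := by
      have h := Nat.floor_le (div_nonneg hs.1 hT₀0.le)
      calc (N:ℝ) * T₀ ≤ (s/T₀) * T₀ := by
            apply mul_le_mul_of_nonneg_right _ hT₀0.le
            exact h
        _ = s := by field_simp
    have hN2 : s < ((N:ℝ)+1) * T₀ := by
      have h := Nat.lt_floor_add_one (s / T₀)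
      calc s = (s/T₀)*T₀ := by field_simp
        _ < ((N:ℝ)+1)*T₀ := by
            apply mul_lt_mul_of_pos_right _ hT₀0
            exact_mod_cast h
    have hchunkmem : ∀ k : ℕ, k ≤ N → ((k:ℝ)*T₀) ∈ Icc (0:ℝ) T := by
      intro k hk
      refine ⟨by positivity, ?_⟩
      calc (k:ℝ)*T₀ ≤ (N:ℝ)*T₀ :=
            mul_le_mul_of_nonneg_right (Nat.cast_le.2 hk) hT₀0.le
        _ ≤ s := hN1
        _ ≤ T := hs.2
    have hadj : ∀ k : ℕ, k < N →
        IntervalIntegrable g₂ volume ((k:ℝ)*T₀) (((k+1:ℕ):ℝ)*T₀) := by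
      intro k hk
      exact hint₂ _ _ (hchunkmem k hk.le) (hchunkmem (k+1) hk)
    have e1 : (∑ k ∈ Finset.range N, ∫ u in ((k:ℝ)*T₀)..(((k+1:ℕ):ℝ)*T₀), g₂ u)
        = ∫ u in (((0:ℕ):ℝ)*T₀)..((N:ℝ)*T₀), g₂ u :=
      intervalIntegral.sum_integral_adjacent_intervals hadj
    have e2 : (∫ u in (0:ℝ)..((N:ℝ)*T₀), g₂ u) + (∫ u in ((N:ℝ)*T₀)..s, g₂ u)
        = ∫ u in (0:ℝ)..s, g₂ u :=
      intervalIntegral.integral_add_adjacent_intervals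
        (hint₂ 0 _ (left_mem_Icc.2 hT.le) (hchunkmem N le_rfl))
        (hint₂ _ s (hchunkmem N le_rfl) hs)
    have hchunk : ∀ k : ℕ, k < N →
        ‖∫ u in ((k:ℝ)*T₀)..(((k+1:ℕ):ℝ)*T₀), g₂ u‖ ≤ (2*M*(‖Ac‖*R')*T₀)*T₀ := by
      intro k hk
      have hkm := hchunkmem k hk.le
      have hk1m := hchunkmem (k+1) hk
      have hcast : (((k+1:ℕ):ℝ)*T₀) = (k:ℝ)*T₀ + T₀ := by push_cast; ring
      have hIsub : Set.uIoc ((k:ℝ)*T₀) (((k+1:ℕ):ℝ)*T₀) ⊆ Icc (0:ℝ) T := hsub _ _ hkm hk1m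
      have hper' : Function.Periodic (fun u => p u - pstar) T₀ := fun u => by simp [hper u]
      have hzero : (∫ u in ((k:ℝ)*T₀)..(((k+1:ℕ):ℝ)*T₀), (p u - pstar)) = 0 := by
        rw [hcast, hper'.intervalIntegral_add_eq ((k:ℝ)*T₀) 0, zero_add]
        have hpT : (∫ u in (0:ℝ)..T₀, p u) = pstar * T₀ := by
          field_simp at hmean
          linarith [hmean]
        rw [intervalIntegral.integral_sub (hpint 0 T₀) intervalIntegrable_const,
          intervalIntegral.integral_const, hpT, smul_eq_mul, sub_zero]
        ring
      have hi1 : IntervalIntegrable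
          (fun u => (p u - pstar) • (Ac (y u) - Ac (y ((k:ℝ)*T₀)))) volume
          ((k:ℝ)*T₀) (((k+1:ℕ):ℝ)*T₀) := by
        refine myIntInt (C := (2*M) * (‖Ac‖*(R'*T₀))) ?_ ?_
        · exact ((hpm.sub measurable_const).aestronglyMeasurable).smul
            (((Ac.continuous.comp_continuousOn (hconty.mono hIsub)).sub
              continuousOn_const).aestronglyMeasurable measurableSet_uIoc)
        · intro u hu
          have hu' : u ∈ Icc (0:ℝ) T := hIsub hu
          rw [Set.uIoc_of_le (by rw [hcast]; linarith)] at hu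
          rw [norm_smul, Real.norm_eq_abs, ← map_sub]
          refine mul_le_mul (hps2M u) ?_ (norm_nonneg _) (by linarith [hM.le])
          calc ‖Ac (y u - y ((k:ℝ)*T₀))‖ ≤ ‖Ac‖ * ‖y u - y ((k:ℝ)*T₀)‖ := Ac.le_opNorm _
            _ ≤ ‖Ac‖ * (R' * T₀) := by
                refine mul_le_mul_of_nonneg_left ?_ (norm_nonneg _)
                refine (hyLip u hu' _ hkm).trans ?_
                have h1 : |u - (k:ℝ)*T₀| ≤ T₀ := by
                  rw [abs_of_nonneg (by linarith [hu.1] : (0:ℝ) ≤ u - (k:ℝ)*T₀)]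
                  have := hu.2
                  rw [hcast] at this
                  linarith
                exact mul_le_mul_of_nonneg_left h1 hR'
      have hi2 : IntervalIntegrable (fun u => (p u - pstar) • Ac (y ((k:ℝ)*T₀))) volume
          ((k:ℝ)*T₀) (((k+1:ℕ):ℝ)*T₀) := by
        refine myIntInt (C := (2*M) * ‖Ac (y ((k:ℝ)*T₀))‖) ?_ ?_
        · exact ((hpm.sub measurable_const).aestronglyMeasurable).smul aestronglyMeasurable_const
        · intro u _
          rw [norm_smul, Real.norm_eq_abs]
          exact mul_le_mul_of_nonneg_right (hps2M u) (norm_nonneg _)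
      have hdec : (∫ u in ((k:ℝ)*T₀)..(((k+1:ℕ):ℝ)*T₀), g₂ u)
          = ∫ u in ((k:ℝ)*T₀)..(((k+1:ℕ):ℝ)*T₀),
              (p u - pstar) • (Ac (y u) - Ac (y ((k:ℝ)*T₀))) := by
        have heq : ∀ u, g₂ u = (p u - pstar) • (Ac (y u) - Ac (y ((k:ℝ)*T₀)))
            + (p u - pstar) • Ac (y ((k:ℝ)*T₀)) := by
          intro u
          simp only [hg₂def, smul_sub]
          abel
        rw [intervalIntegral.integral_congr (fun u _ => heq u),
          intervalIntegral.integral_add hi1 hi2,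
          intervalIntegral.integral_smul_const, hzero, zero_smul, add_zero]
      rw [hdec]
      refine (intervalIntegral.norm_integral_le_of_norm_le_const
        (C := (2*M)*(‖Ac‖*(R'*T₀))) ?_).trans ?_
      · intro u hu
        have hu' : u ∈ Icc (0:ℝ) T := hIsub hu
        rw [Set.uIoc_of_le (by rw [hcast]; linarith)] at hu
        rw [norm_smul, Real.norm_eq_abs, ← map_sub]
        refine mul_le_mul (hps2M u) ?_ (norm_nonneg _) (by linarith [hM.le])
        calc ‖Ac (y u - y ((k:ℝ)*T₀))‖ ≤ ‖Ac‖ * ‖y u - y ((k:ℝ)*T₀)‖ := Ac.le_opNorm _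
          _ ≤ ‖Ac‖ * (R' * T₀) := by
              refine mul_le_mul_of_nonneg_left ?_ (norm_nonneg _)
              refine (hyLip u hu' _ hkm).trans ?_
              have h1 : |u - (k:ℝ)*T₀| ≤ T₀ := by
                rw [abs_of_nonneg (by linarith [hu.1] : (0:ℝ) ≤ u - (k:ℝ)*T₀)]
                have := hu.2
                rw [hcast] at this
                linarith
              exact mul_le_mul_of_nonneg_left h1 hR'
      · rw [hcast, show (k:ℝ)*T₀ + T₀ - (k:ℝ)*T₀ = T₀ by ring, abs_of_pos hT₀0]
        apply le_of_eq
        ring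
    have hsum : ‖∑ k ∈ Finset.range N, ∫ u in ((k:ℝ)*T₀)..(((k+1:ℕ):ℝ)*T₀), g₂ u‖
        ≤ (N:ℝ) * ((2*M*(‖Ac‖*R')*T₀)*T₀) := by
      refine (norm_sum_le _ _).trans ?_
      calc (∑ k ∈ Finset.range N, ‖∫ u in ((k:ℝ)*T₀)..(((k+1:ℕ):ℝ)*T₀), g₂ u‖)
          ≤ ∑ _k ∈ Finset.range N, (2*M*(‖Ac‖*R')*T₀)*T₀ :=
            Finset.sum_le_sum (fun k hk => hchunk k (Finset.mem_range.1 hk))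
        _ = (N:ℝ) * ((2*M*(‖Ac‖*R')*T₀)*T₀) := by
            rw [Finset.sum_const, Finset.card_range, nsmul_eq_mul]
    have htail : ‖∫ u in ((N:ℝ)*T₀)..s, g₂ u‖ ≤ (2*M*(‖Ac‖*R))*T₀ := by
      refine (intervalIntegral.norm_integral_le_of_norm_le_const (C := 2*M*(‖Ac‖*R))
        (fun u hu => hg₂bd u (hsub _ _ (hchunkmem N le_rfl) hs hu))).trans ?_
      rw [abs_of_nonneg (by linarith : (0:ℝ) ≤ s - (N:ℝ)*T₀)]
      have h1 : s - (N:ℝ)*T₀ ≤ T₀ := by linarith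
      have hc : (0:ℝ) ≤ 2*M*(‖Ac‖*R) := by positivity
      exact mul_le_mul_of_nonneg_left h1 hc
    have e1' : (∑ k ∈ Finset.range N, ∫ u in ((k:ℝ)*T₀)..(((k+1:ℕ):ℝ)*T₀), g₂ u)
        = ∫ u in (0:ℝ)..((N:ℝ)*T₀), g₂ u := by
      rw [e1]
      norm_num
    rw [← e2, ← e1']
    refine (norm_add_le _ _).trans ?_
    have hNT : (N:ℝ)*T₀ ≤ T := hN1.trans hs.2
    have h2 : (N:ℝ) * ((2*M*(‖Ac‖*R')*T₀)*T₀) ≤ 2*M*(‖Ac‖*R')*T*T₀ := by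
      have hc : (0:ℝ) ≤ 2*M*(‖Ac‖*R') := by positivity
      nlinarith [mul_le_mul_of_nonneg_left hNT (mul_nonneg hc hT₀0.le)]
    calc ‖∑ k ∈ Finset.range N, ∫ u in ((k:ℝ)*T₀)..(((k+1:ℕ):ℝ)*T₀), g₂ u‖
          + ‖∫ u in ((N:ℝ)*T₀)..s, g₂ u‖
        ≤ (N:ℝ) * ((2*M*(‖Ac‖*R')*T₀)*T₀) + (2*M*(‖Ac‖*R))*T₀ := add_le_add hsum htail
      _ ≤ 2*M*(‖Ac‖*R')*T*T₀ + (2*M*(‖Ac‖*R))*T₀ := by linarith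
      _ = C₁ * T₀ := by rw [hC₁def]; ring
  -- Gronwall wrap-up via a clamped distance function
  set cl : ℝ → ℝ := fun u => max 0 (min u T) with hcldef
  have hclc : Continuous cl := continuous_const.max (continuous_id.min continuous_const)
  have hclm : ∀ u, cl u ∈ Icc (0:ℝ) T :=
    fun u => ⟨le_max_left _ _, max_le hT.le (min_le_right _ _)⟩
  have hcleq : ∀ u ∈ Icc (0:ℝ) T, cl u = u := by
    intro u hu
    simp only [hcldef]
    rw [min_eq_left hu.2, max_eq_right hu.1]
  set φ : ℝ → ℝ := fun u => ‖x (cl u) - y (cl u)‖ with hφdef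
  have hφc : Continuous φ :=
    ((hcontx.comp_continuous hclc hclm).sub (hconty.comp_continuous hclc hclm)).norm
  have hφeq : ∀ u ∈ Icc (0:ℝ) T, φ u = ‖x u - y u‖ := by
    intro u hu
    simp only [hφdef]
    rw [hcleq u hu]
  have hφ0 : ∀ u, 0 ≤ φ u := fun u => norm_nonneg _
  set ψ : ℝ → ℝ := fun s => ∫ u in (0:ℝ)..s, φ u with hψdef
  have hψd : ∀ s, HasDerivAt ψ (φ s) s := fun s => (hφc.integral_hasStrictDerivAt 0 s).hasDerivAt
  have hψnn : ∀ s, 0 ≤ s → 0 ≤ ψ s := fun s hs0 =>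
    intervalIntegral.integral_nonneg hs0 (fun u _ => hφ0 u)
  have hkey : ∀ s ∈ Icc (0:ℝ) T, ‖x s - y s‖ ≤ K * ψ s + C₁ * T₀ := by
    intro s hs
    rw [hftc s hs,
      intervalIntegral.integral_add (hint₁ s hs) (hint₂ 0 s (left_mem_Icc.2 hT.le) hs)]
    refine (norm_add_le _ _).trans ?_
    have h1 : ‖∫ u in (0:ℝ)..s, g₁ u‖ ≤ K * ψ s := by
      refine (intervalIntegral.norm_integral_le_integral_norm hs.1).trans ?_
      have hmono : (∫ u in (0:ℝ)..s, ‖g₁ u‖) ≤ ∫ u in (0:ℝ)..s, K * φ u := by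
        refine intervalIntegral.integral_mono_on hs.1 (hint₁ s hs).norm
          ((continuous_const.mul hφc).intervalIntegrable _ _) ?_
        intro u hu
        have hu' : u ∈ Icc (0:ℝ) T := Icc_subset_Icc le_rfl hs.2 hu
        rw [hφeq u hu']
        exact hg₁bd u hu'
      rwa [intervalIntegral.integral_const_mul] at hmono
    linarith [h1, hB s hs]
  have hgron := norm_le_gronwallBound_of_norm_deriv_right_le (f := ψ) (f' := φ)
    (δ := 0) (K := K) (ε := C₁ * T₀) (a := 0) (b := T)
    (fun s _ => (hψd s).continuousAt.continuousWithinAt)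
    (fun s _ => (hψd s).hasDerivWithinAt)
    (by simp only [hψdef]; rw [intervalIntegral.integral_same]; simp)
    (fun s hs => by
      rw [Real.norm_of_nonneg (hφ0 s), Real.norm_of_nonneg (hψnn s hs.1),
        hφeq s (Ico_subset_Icc_self hs)]
      exact hkey s (Ico_subset_Icc_self hs))
  have hψb := hgron t ht
  rw [Real.norm_of_nonneg (hψnn t ht.1), sub_zero] at hψb
  have h3 := gb_final (T := T) hK (mul_nonneg hC₁ hT₀0.le) ht.1 ht.2
  have h4 : K * ψ t ≤ K * gronwallBound 0 K (C₁*T₀) t := mul_le_mul_of_nonneg_left hψb hK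
  have h5 : ‖x t - y t‖ ≤ (C₁*T₀) * Real.exp (K*T) := by
    have := hkey t ht
    linarith
  refine h5.trans ?_
  have he := Real.exp_pos (K*T)
  nlinarith [he.le, hT₀0.le]
end

section
/- Let f : ℝⁿ → ℝⁿ be Lipschitz with constant L ≥ 0, A : ℝⁿ → ℝⁿ a linear map, x₀ ∈ ℝⁿ, T > 0, M > 0 and p* ∈ ℝ. Then for every ε > 0 there exists δ > 0 such that: for every T₀ ∈ (0,δ), every measurable T₀-periodic function p : ℝ → ℝ with |p(t)| ≤ M for all t and mean value p*, every solution x of the switched system on [0,T] and every solution y of the averaged system (with parameter p*) on [0,T], one has sup_{t ∈ [0,T]} ‖x(t) − y(t)‖ ≤ ε; i.e., as the switching period tends to 0 the solution of the switched system approaches the solution of the averaged system uniformly on [0,T]. -/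
open Set MeasureTheory intervalIntegral

set_option maxHeartbeats 1000000
set_option synthInstance.maxHeartbeats 400000

/-- Auxiliary: a bounded a.e.-strongly-measurable function is interval integrable. -/
lemma ps_aux_intervalIntegrable {E : Type*} [NormedAddCommGroup E] {g : ℝ → E} {a b C : ℝ}
    (hm : AEStronglyMeasurable g (volume.restrict (Set.uIoc a b)))
    (hb : ∀ s ∈ Set.uIoc a b, ‖g s‖ ≤ C) :
    IntervalIntegrable g volume a b := by
  rw [intervalIntegrable_iff]
  refine Integrable.mono' (integrableOn_const ?_) hm
    (ae_restrict_of_forall_mem measurableSet_uIoc hb)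
  exact measure_Ioc_lt_top.ne

/-- Auxiliary: `gronwallBound` is monotone in the time variable. -/
lemma ps_aux_gronwallBound_mono {δ K ε : ℝ} (hδ : 0 ≤ δ) (hK : 0 < K) (hε : 0 ≤ ε)
    {s t : ℝ} (h : s ≤ t) : gronwallBound δ K ε s ≤ gronwallBound δ K ε t := by
  rw [gronwallBound_of_K_ne_0 hK.ne']
  have h1 : Real.exp (K * s) ≤ Real.exp (K * t) :=
    Real.exp_le_exp.2 (mul_le_mul_of_nonneg_left h hK.le)
  have h2 : 0 ≤ ε / K := div_nonneg hε hK.le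
  nlinarith [h1, h2, hδ]

/-- Theorem 1 of the paper: as the switching period `T₀` tends to `0`,
the solution of the switched system approaches the solution of the averaged system
uniformly on `[0, T]`. -/
theorem ps_switched_approaches_averaged
    {n : ℕ} (f : EuclideanSpace ℝ (Fin n) → EuclideanSpace ℝ (Fin n))
    (L : ℝ) (hL : 0 ≤ L) (hf : LipschitzWith L.toNNReal f)
    (A : EuclideanSpace ℝ (Fin n) →ₗ[ℝ] EuclideanSpace ℝ (Fin n))
    (x₀ : EuclideanSpace ℝ (Fin n)) (T M : ℝ) (hT : 0 < T) (hM : 0 < M) (pstar : ℝ) :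
    ∀ ε > 0, ∃ δ > 0, ∀ T₀ : ℝ, T₀ ∈ Set.Ioo (0 : ℝ) δ →
      ∀ p : ℝ → ℝ, Measurable p →
        (∀ t : ℝ, p (t + T₀) = p t) →
        (∀ t : ℝ, |p t| ≤ M) →
        (1 / T₀) * (∫ u in (0 : ℝ)..T₀, p u) = pstar →
        ∀ x y : ℝ → EuclideanSpace ℝ (Fin n),
          x 0 = x₀ →
          (∀ t ∈ Set.Icc (0 : ℝ) T, HasDerivAt x (f (x t) + p t • A (x t)) t) →
          y 0 = x₀ →
          (∀ t ∈ Set.Icc (0 : ℝ) T, HasDerivAt y (f (y t) + pstar • A (y t)) t) →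
          ∀ t ∈ Set.Icc (0 : ℝ) T, ‖x t - y t‖ ≤ ε := by
  intro ε hε
  -- the operator norm of A
  obtain ⟨C, hC0, hCA⟩ : ∃ C : ℝ, 0 ≤ C ∧ ∀ v, ‖A v‖ ≤ C * ‖v‖ := by
    refine ⟨‖LinearMap.toContinuousLinearMap A‖, norm_nonneg _, fun v => ?_⟩
    simpa using (LinearMap.toContinuousLinearMap A).le_opNorm v
  have hAcont : Continuous fun v : EuclideanSpace ℝ (Fin n) => A v :=
    A.continuous_of_finiteDimensional
  have hfL : ∀ a b, ‖f a - f b‖ ≤ L * ‖a - b‖ := by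
    intro a b
    have := hf.dist_le_mul a b
    rwa [dist_eq_norm, dist_eq_norm, Real.coe_toNNReal L hL] at this
  set F : ℝ := ‖f 0‖ with hFdef
  have hF0 : 0 ≤ F := norm_nonneg _
  set K : ℝ := L + M * C + 1 with hKdef
  have hK0 : 0 < K := by nlinarith [mul_nonneg hM.le hC0]
  set R : ℝ := gronwallBound ‖x₀‖ K F T with hRdef
  have hR0 : 0 ≤ R := by
    rw [hRdef, gronwallBound_of_K_ne_0 hK0.ne']
    have h1 : (1 : ℝ) ≤ Real.exp (K * T) := Real.one_le_exp (by positivity)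
    have h2 : 0 ≤ F / K := div_nonneg hF0 hK0.le
    nlinarith [norm_nonneg x₀, Real.exp_pos (K * T)]
  set D : ℝ := F + K * R with hDdef
  have hD0 : 0 ≤ D := by positivity
  set Q : ℝ := 2 * M * C * (D * T + R) with hQdef
  have hQ0 : 0 ≤ Q := by positivity
  set η : ℝ := ε * Real.exp (-(K * T)) with hηdef
  have hη0 : 0 < η := by positivity
  refine ⟨min T (η / (Q + 1)), lt_min hT (by positivity), ?_⟩
  rintro T₀ ⟨hT₀0, hT₀δ⟩ p hpm hpper hpM hpmean x y hx0 hx hy0 hy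
  have hT₀T : T₀ ≤ T := le_of_lt (lt_of_lt_of_le hT₀δ (min_le_left _ _))
  -- basic facts about p
  have hpI : ∀ u v : ℝ, IntervalIntegrable p volume u v := fun u v =>
    ps_aux_intervalIntegrable (hpm.aestronglyMeasurable.restrict)
      (fun s _ => by rw [Real.norm_eq_abs]; exact hpM s)
  have hpsM : |pstar| ≤ M := by
    rw [← hpmean]
    have h1 : ‖∫ u in (0:ℝ)..T₀, p u‖ ≤ M * |T₀ - 0| :=
      intervalIntegral.norm_integral_le_of_norm_le_const
        (fun s _ => by rw [Real.norm_eq_abs]; exact hpM s)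
    rw [sub_zero, abs_of_pos hT₀0, Real.norm_eq_abs] at h1
    rw [abs_mul, abs_of_pos (by positivity : (0:ℝ) < 1 / T₀)]
    calc 1 / T₀ * |∫ u in (0:ℝ)..T₀, p u| ≤ 1 / T₀ * (M * T₀) := by
          exact mul_le_mul_of_nonneg_left h1 (by positivity)
      _ = M := by field_simp
  -- continuity of solutions
  have hxc : ContinuousOn x (Icc 0 T) := fun s hs => (hx s hs).continuousAt.continuousWithinAt
  have hyc : ContinuousOn y (Icc 0 T) := fun s hs => (hy s hs).continuousAt.continuousWithinAt
  -- a priori bounds on x and y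
  have hderiv_bound : ∀ (u : ℝ → EuclideanSpace ℝ (Fin n)) (q : ℝ → ℝ), (∀ s, |q s| ≤ M) →
      ∀ s : ℝ, ‖f (u s) + q s • A (u s)‖ ≤ K * ‖u s‖ + F := by
    intro u q hq s
    have h1 : ‖f (u s)‖ ≤ F + L * ‖u s‖ := by
      have h := hfL (u s) 0
      have h2 : ‖f (u s)‖ - ‖f 0‖ ≤ ‖f (u s) - f 0‖ := norm_sub_norm_le _ _
      rw [sub_zero] at h
      linarith
    have h2 : ‖q s • A (u s)‖ ≤ M * (C * ‖u s‖) := by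
      rw [norm_smul, Real.norm_eq_abs]
      exact mul_le_mul (hq s) (hCA _) (norm_nonneg _) hM.le
    calc ‖f (u s) + q s • A (u s)‖ ≤ ‖f (u s)‖ + ‖q s • A (u s)‖ := norm_add_le _ _
      _ ≤ (F + L * ‖u s‖) + M * (C * ‖u s‖) := add_le_add h1 h2
      _ ≤ K * ‖u s‖ + F := by rw [hKdef]; nlinarith [norm_nonneg (u s)]
  have hbound : ∀ (u : ℝ → EuclideanSpace ℝ (Fin n)) (q : ℝ → ℝ), (∀ s, |q s| ≤ M) →
      u 0 = x₀ → (∀ s ∈ Icc (0:ℝ) T, HasDerivAt u (f (u s) + q s • A (u s)) s) →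
      ContinuousOn u (Icc 0 T) → ∀ s ∈ Icc (0:ℝ) T, ‖u s‖ ≤ R := by
    intro u q hq hu0 hu huc s hs
    have h := norm_le_gronwallBound_of_norm_deriv_right_le (f := u)
      (f' := fun s => f (u s) + q s • A (u s)) (δ := ‖x₀‖) (K := K) (ε := F) (a := 0) (b := T)
      huc (fun s hs => (hu s (Ico_subset_Icc_self hs)).hasDerivWithinAt)
      (by rw [hu0]) (fun s _ => hderiv_bound u q hq s) s hs
    calc ‖u s‖ ≤ gronwallBound ‖x₀‖ K F (s - 0) := h
      _ ≤ R := by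
          rw [sub_zero, hRdef]
          exact ps_aux_gronwallBound_mono (norm_nonneg _) hK0 hF0 hs.2
  have hxR : ∀ s ∈ Icc (0:ℝ) T, ‖x s‖ ≤ R := hbound x p hpM hx0 hx hxc
  have hyR : ∀ s ∈ Icc (0:ℝ) T, ‖y s‖ ≤ R :=
    hbound y (fun _ => pstar) (fun _ => hpsM) hy0 hy hyc
  -- derivative bounds
  have hgyD : ∀ s ∈ Icc (0:ℝ) T, ‖f (y s) + pstar • A (y s)‖ ≤ D := by
    intro s hs
    have h := hderiv_bound y (fun _ => pstar) (fun _ => hpsM) s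
    have h2 : K * ‖y s‖ ≤ K * R := mul_le_mul_of_nonneg_left (hyR s hs) hK0.le
    rw [hDdef]; linarith
  have hgxD : ∀ s ∈ Icc (0:ℝ) T, ‖f (x s) + p s • A (x s)‖ ≤ D := by
    intro s hs
    have h := hderiv_bound x p hpM s
    have h2 : K * ‖x s‖ ≤ K * R := mul_le_mul_of_nonneg_left (hxR s hs) hK0.le
    rw [hDdef]; linarith
  -- y is D-Lipschitz on [0,T]
  have hyLip : ∀ u ∈ Icc (0:ℝ) T, ∀ v ∈ Icc (0:ℝ) T, ‖y u - y v‖ ≤ D * ‖u - v‖ := by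
    intro u hu v hv
    exact (convex_Icc (0:ℝ) T).norm_image_sub_le_of_norm_hasDerivWithin_le
      (fun s hs => (hy s hs).hasDerivWithinAt) hgyD hv hu
  -- the oscillating integrand
  set w : ℝ → EuclideanSpace ℝ (Fin n) := fun s => (p s - pstar) • A (y s) with hwdef
  have hwB : ∀ s ∈ Icc (0:ℝ) T, ‖w s‖ ≤ 2 * M * (C * R) := by
    intro s hs
    rw [hwdef, norm_smul, Real.norm_eq_abs]
    have h1 : |p s - pstar| ≤ 2 * M := by
      have := abs_le.1 (hpM s); have := abs_le.1 hpsM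
      exact abs_le.2 ⟨by linarith, by linarith⟩
    have h2 : ‖A (y s)‖ ≤ C * R := (hCA _).trans (mul_le_mul_of_nonneg_left (hyR s hs) hC0)
    exact mul_le_mul h1 h2 (norm_nonneg _) (by positivity)
  have hwI : ∀ u v : ℝ, Set.uIoc u v ⊆ Icc (0:ℝ) T → IntervalIntegrable w volume u v := by
    intro u v huv
    refine ps_aux_intervalIntegrable (C := 2 * M * (C * R)) ?_ (fun s hs => hwB s (huv hs))
    exact ((hpm.sub measurable_const).aestronglyMeasurable.restrict).smul
      ((hAcont.comp_continuousOn (hyc.mono huv)).aestronglyMeasurable measurableSet_uIoc)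
  -- Key estimate: the integral of w over [0,t] is small
  have hW : ∀ t ∈ Icc (0:ℝ) T, ‖∫ s in (0:ℝ)..t, w s‖ ≤ Q * T₀ := by
    intro t ht
    set N := ⌊t / T₀⌋₊ with hNdef
    have hN1 : (N : ℝ) * T₀ ≤ t := by
      have h := Nat.floor_le (div_nonneg ht.1 hT₀0.le)
      calc (N : ℝ) * T₀ ≤ t / T₀ * T₀ := mul_le_mul_of_nonneg_right h hT₀0.le
        _ = t := div_mul_cancel₀ t hT₀0.ne'
    have hN2 : t - (N : ℝ) * T₀ ≤ T₀ := by
      have h : t / T₀ < (N : ℝ) + 1 := by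
        rw [hNdef]; exact_mod_cast Nat.lt_floor_add_one (t / T₀)
      have h2 : t < ((N : ℝ) + 1) * T₀ := by
        calc t = t / T₀ * T₀ := (div_mul_cancel₀ t hT₀0.ne').symm
          _ < ((N : ℝ) + 1) * T₀ := mul_lt_mul_of_pos_right h hT₀0
      linarith
    have hkT : ∀ k : ℕ, k ≤ N → (k : ℝ) * T₀ ∈ Icc (0:ℝ) T := by
      intro k hk
      refine ⟨by positivity, ?_⟩
      calc (k : ℝ) * T₀ ≤ (N : ℝ) * T₀ :=
            mul_le_mul_of_nonneg_right (Nat.cast_le.2 hk) hT₀0.le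
        _ ≤ t := hN1
        _ ≤ T := ht.2
    have hsubIoc : ∀ u v : ℝ, u ∈ Icc (0:ℝ) T → v ∈ Icc (0:ℝ) T →
        Set.uIoc u v ⊆ Icc (0:ℝ) T := by
      intro u v hu hv s hs
      rw [Set.uIoc] at hs
      exact ⟨le_trans (le_inf hu.1 hv.1) hs.1.le, le_trans hs.2 (sup_le hu.2 hv.2)⟩
    -- per-period estimate
    have hper : ∀ k : ℕ, k < N →
        ‖∫ s in ((k:ℝ) * T₀)..((k:ℝ) * T₀ + T₀), w s‖ ≤ 2 * M * (C * (D * T₀)) * T₀ := by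
      intro k hk
      set c : ℝ := (k : ℝ) * T₀ with hcdef
      have hc : c ∈ Icc (0:ℝ) T := hkT k hk.le
      have hc' : c + T₀ ∈ Icc (0:ℝ) T := by
        have h : c + T₀ = ((k + 1 : ℕ) : ℝ) * T₀ := by push_cast; ring
        rw [h]; exact hkT (k + 1) hk
      have hsub : Set.uIoc c (c + T₀) ⊆ Icc (0:ℝ) T := hsubIoc _ _ hc hc'
      -- zero mean over the period
      have hper' : Function.Periodic p T₀ := hpper
      have hmean0 : (∫ s in c..(c + T₀), (p s - pstar)) = 0 := by
        rw [intervalIntegral.integral_sub (hpI _ _) intervalIntegrable_const,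
          hper'.intervalIntegral_add_eq c 0, zero_add, intervalIntegral.integral_const]
        have hI : ∫ u in (0:ℝ)..T₀, p u = pstar * T₀ := by
          have h := hpmean
          field_simp at h
          linarith
        rw [hI]
        simp [smul_eq_mul]
        ring
      -- decompose
      have hconstI : IntervalIntegrable (fun s => (p s - pstar) • A (y c)) volume c (c + T₀) := by
        refine ps_aux_intervalIntegrable (C := 2 * M * ‖A (y c)‖)
          (((hpm.sub measurable_const).aestronglyMeasurable.restrict).smul
            aestronglyMeasurable_const) (fun s _ => ?_)
        rw [norm_smul, Real.norm_eq_abs]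
        have h1 : |p s - pstar| ≤ 2 * M := by
          have := abs_le.1 (hpM s); have := abs_le.1 hpsM
          exact abs_le.2 ⟨by linarith, by linarith⟩
        exact mul_le_mul_of_nonneg_right h1 (norm_nonneg _)
      have hwint : IntervalIntegrable w volume c (c + T₀) := hwI c (c + T₀) hsub
      have hdiffI : IntervalIntegrable (fun s => (p s - pstar) • (A (y s) - A (y c)))
          volume c (c + T₀) := by
        have : (fun s => (p s - pstar) • (A (y s) - A (y c)))
            = fun s => w s - (p s - pstar) • A (y c) := by
          funext s; rw [hwdef]; simp [smul_sub]
        rw [this]; exact hwint.sub hconstI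
      have hdecomp : ∫ s in c..(c + T₀), w s
          = ∫ s in c..(c + T₀), (p s - pstar) • (A (y s) - A (y c)) := by
        have h1 : ∫ s in c..(c + T₀), (p s - pstar) • (A (y s) - A (y c))
            = (∫ s in c..(c + T₀), w s) - ∫ s in c..(c + T₀), (p s - pstar) • A (y c) := by
          rw [← intervalIntegral.integral_sub hwint hconstI]
          congr 1; funext s; rw [hwdef]; simp [smul_sub]
        rw [h1, intervalIntegral.integral_smul_const, hmean0, zero_smul, sub_zero]
      rw [hdecomp]
      have hbnd : ∀ s ∈ Set.uIoc c (c + T₀),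
          ‖(p s - pstar) • (A (y s) - A (y c))‖ ≤ 2 * M * (C * (D * T₀)) := by
        intro s hs
        have hsT : s ∈ Icc (0:ℝ) T := hsub hs
        rw [Set.uIoc_of_le (by linarith [hT₀0] : c ≤ c + T₀)] at hs
        rw [norm_smul, Real.norm_eq_abs]
        have h1 : |p s - pstar| ≤ 2 * M := by
          have := abs_le.1 (hpM s); have := abs_le.1 hpsM
          exact abs_le.2 ⟨by linarith, by linarith⟩
        have h2 : ‖A (y s) - A (y c)‖ ≤ C * (D * T₀) := by
          rw [← map_sub]
          refine (hCA _).trans ?_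
          refine mul_le_mul_of_nonneg_left ?_ hC0
          refine (hyLip s hsT c hc).trans ?_
          refine mul_le_mul_of_nonneg_left ?_ hD0
          rw [Real.norm_eq_abs, abs_of_pos (by linarith [hs.1] : (0:ℝ) < s - c)]
          linarith [hs.2]
        exact mul_le_mul h1 h2 (norm_nonneg _) (by positivity)
      have := intervalIntegral.norm_integral_le_of_norm_le_const hbnd
      rwa [add_sub_cancel_left, abs_of_pos hT₀0] at this
    -- integrability on subintervals
    have hNT : (N : ℝ) * T₀ ∈ Icc (0:ℝ) T := ⟨by positivity, hN1.trans ht.2⟩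
    have h0T : (0:ℝ) ∈ Icc (0:ℝ) T := ⟨le_rfl, hT.le⟩
    have hw0N : IntervalIntegrable w volume 0 ((N : ℝ) * T₀) :=
      hwI _ _ (hsubIoc _ _ h0T hNT)
    have hwNt : IntervalIntegrable w volume ((N : ℝ) * T₀) t :=
      hwI _ _ (hsubIoc _ _ hNT ht)
    have hsplit : ∫ s in (0:ℝ)..t, w s
        = (∫ s in (0:ℝ)..((N : ℝ) * T₀), w s) + ∫ s in ((N : ℝ) * T₀)..t, w s :=
      (intervalIntegral.integral_add_adjacent_intervals hw0N hwNt).symm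
    have hsum : ∫ s in (0:ℝ)..((N : ℝ) * T₀), w s
        = ∑ k ∈ Finset.range N, ∫ s in ((k:ℝ) * T₀)..(((k:ℝ) + 1) * T₀), w s := by
      have hint : ∀ k : ℕ, k < N →
          IntervalIntegrable w volume ((k : ℝ) * T₀) (((k + 1 : ℕ) : ℝ) * T₀) :=
        fun k hk => hwI _ _ (hsubIoc _ _ (hkT k hk.le) (hkT (k + 1) hk))
      have h := intervalIntegral.sum_integral_adjacent_intervals
        (a := fun k : ℕ => (k : ℝ) * T₀) (n := N) (f := w) (μ := volume) hint
      simp only [Nat.cast_zero, zero_mul, Nat.cast_add, Nat.cast_one] at h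
      exact h.symm
    have hsum_bound : ‖∑ k ∈ Finset.range N, ∫ s in ((k:ℝ) * T₀)..(((k:ℝ) + 1) * T₀), w s‖
        ≤ (N : ℝ) * (2 * M * (C * (D * T₀)) * T₀) := by
      calc ‖∑ k ∈ Finset.range N, ∫ s in ((k:ℝ) * T₀)..(((k:ℝ) + 1) * T₀), w s‖
          ≤ ∑ k ∈ Finset.range N, ‖∫ s in ((k:ℝ) * T₀)..(((k:ℝ) + 1) * T₀), w s‖ :=
            norm_sum_le _ _
        _ ≤ ∑ _k ∈ Finset.range N, (2 * M * (C * (D * T₀)) * T₀) := by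
            refine Finset.sum_le_sum (fun k hk => ?_)
            have h := hper k (Finset.mem_range.1 hk)
            have he : ((k:ℝ) + 1) * T₀ = (k:ℝ) * T₀ + T₀ := by ring
            rwa [he]
        _ = (N : ℝ) * (2 * M * (C * (D * T₀)) * T₀) := by
            rw [Finset.sum_const, Finset.card_range, nsmul_eq_mul]
    have htail : ‖∫ s in ((N : ℝ) * T₀)..t, w s‖ ≤ 2 * M * (C * R) * T₀ := by
      have h := intervalIntegral.norm_integral_le_of_norm_le_const
        (C := 2 * M * (C * R)) (f := w) (a := (N : ℝ) * T₀) (b := t)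
        (fun s hs => hwB s (hsubIoc _ _ ⟨by positivity, hN1.trans ht.2⟩ ht hs))
      refine h.trans ?_
      refine mul_le_mul_of_nonneg_left ?_ (by positivity)
      rw [abs_of_nonneg (by linarith : (0:ℝ) ≤ t - (N : ℝ) * T₀)]
      linarith
    calc ‖∫ s in (0:ℝ)..t, w s‖
        ≤ ‖∫ s in (0:ℝ)..((N : ℝ) * T₀), w s‖ + ‖∫ s in ((N : ℝ) * T₀)..t, w s‖ := by
          rw [hsplit]; exact norm_add_le _ _
      _ ≤ (N : ℝ) * (2 * M * (C * (D * T₀)) * T₀) + 2 * M * (C * R) * T₀ := by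
          rw [hsum]; exact add_le_add hsum_bound htail
      _ ≤ 2 * M * C * D * T₀ * T + 2 * M * (C * R) * T₀ := by
          have h : (N : ℝ) * (2 * M * (C * (D * T₀)) * T₀)
              = 2 * M * C * D * T₀ * ((N : ℝ) * T₀) := by ring
          rw [h]
          have h2 : (N : ℝ) * T₀ ≤ T := hN1.trans ht.2
          have h3 : (0:ℝ) ≤ 2 * M * C * D * T₀ := by positivity
          nlinarith
      _ = Q * T₀ := by rw [hQdef]; ring
  -- Key integral inequality
  have key : ∀ t ∈ Icc (0:ℝ) T, ‖x t - y t‖ ≤ η + K * ∫ s in (0:ℝ)..t, ‖x s - y s‖ := by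
    intro t ht
    have hsubIcc : Set.uIcc (0:ℝ) t ⊆ Icc (0:ℝ) T := by
      rw [Set.uIcc_of_le ht.1]; exact Icc_subset_Icc le_rfl ht.2
    have hsubIoc : Set.uIoc (0:ℝ) t ⊆ Icc (0:ℝ) T := by
      rw [Set.uIoc_of_le ht.1]
      exact fun s hs => ⟨hs.1.le, hs.2.trans ht.2⟩
    set gx : ℝ → EuclideanSpace ℝ (Fin n) := fun s => f (x s) + p s • A (x s) with hgxdef
    set gy : ℝ → EuclideanSpace ℝ (Fin n) := fun s => f (y s) + pstar • A (y s) with hgydef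
    have hIgx : IntervalIntegrable gx volume 0 t := by
      refine ps_aux_intervalIntegrable (C := D) ?_ (fun s hs => hgxD s (hsubIoc hs))
      refine AEStronglyMeasurable.add ?_ ?_
      · exact (hf.continuous.comp_continuousOn (hxc.mono hsubIoc)).aestronglyMeasurable
          measurableSet_uIoc
      · exact (hpm.aestronglyMeasurable.restrict).smul
          ((hAcont.comp_continuousOn (hxc.mono hsubIoc)).aestronglyMeasurable measurableSet_uIoc)
    have hIgy : IntervalIntegrable gy volume 0 t := by
      apply ContinuousOn.intervalIntegrable
      exact ((hf.continuous.comp_continuousOn (hyc.mono hsubIcc)).add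
        (((hAcont.comp_continuousOn (hyc.mono hsubIcc))).const_smul pstar))
    have hxFTC : ∫ s in (0:ℝ)..t, gx s = x t - x 0 :=
      intervalIntegral.integral_eq_sub_of_hasDerivAt (fun s hs => hx s (hsubIcc hs)) hIgx
    have hyFTC : ∫ s in (0:ℝ)..t, gy s = y t - y 0 :=
      intervalIntegral.integral_eq_sub_of_hasDerivAt (fun s hs => hy s (hsubIcc hs)) hIgy
    have hz : x t - y t = ∫ s in (0:ℝ)..t, (gx s - gy s) := by
      rw [intervalIntegral.integral_sub hIgx hIgy, hxFTC, hyFTC, hx0, hy0]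
      abel
    set h : ℝ → EuclideanSpace ℝ (Fin n) :=
      fun s => (f (x s) - f (y s)) + p s • A (x s - y s) with hhdef
    have hIw : IntervalIntegrable w volume 0 t := hwI 0 t hsubIoc
    have hIh : IntervalIntegrable h volume 0 t := by
      have heq : h = fun s => (gx s - gy s) - w s := by
        funext s
        rw [hhdef, hgxdef, hgydef, hwdef]
        simp only [map_sub, smul_sub, sub_smul]
        abel
      rw [heq]; exact (hIgx.sub hIgy).sub hIw
    have hzsplit : x t - y t = (∫ s in (0:ℝ)..t, h s) + ∫ s in (0:ℝ)..t, w s := by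
      rw [hz, ← intervalIntegral.integral_add hIh hIw]
      congr 1; funext s
      rw [hhdef, hgxdef, hgydef, hwdef]
      simp only [map_sub, smul_sub, sub_smul]
      abel
    have hzcont : ContinuousOn (fun s => ‖x s - y s‖) (Icc 0 T) := (hxc.sub hyc).norm
    have hKzI : IntervalIntegrable (fun s => K * ‖x s - y s‖) volume 0 t := by
      apply ContinuousOn.intervalIntegrable
      exact continuousOn_const.mul (hzcont.mono hsubIcc)
    have hhb : ∀ᵐ s ∂volume.restrict (Set.uIoc (0:ℝ) t), ‖h s‖ ≤ K * ‖x s - y s‖ := by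
      refine ae_restrict_of_forall_mem measurableSet_uIoc (fun s _ => ?_)
      have h1 : ‖f (x s) - f (y s)‖ ≤ L * ‖x s - y s‖ := hfL _ _
      have h2 : ‖p s • A (x s - y s)‖ ≤ M * (C * ‖x s - y s‖) := by
        rw [norm_smul, Real.norm_eq_abs]
        exact mul_le_mul (hpM s) (hCA _) (norm_nonneg _) hM.le
      calc ‖h s‖ ≤ ‖f (x s) - f (y s)‖ + ‖p s • A (x s - y s)‖ := norm_add_le _ _
        _ ≤ L * ‖x s - y s‖ + M * (C * ‖x s - y s‖) := add_le_add h1 h2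
        _ ≤ K * ‖x s - y s‖ := by rw [hKdef]; nlinarith [norm_nonneg (x s - y s)]
    have hH : ‖∫ s in (0:ℝ)..t, h s‖ ≤ K * ∫ s in (0:ℝ)..t, ‖x s - y s‖ := by
      have h2 := intervalIntegral.norm_integral_le_abs_of_norm_le hhb hKzI
      have h3 : |∫ s in (0:ℝ)..t, K * ‖x s - y s‖| = ∫ s in (0:ℝ)..t, K * ‖x s - y s‖ :=
        abs_of_nonneg (intervalIntegral.integral_nonneg ht.1 (fun s _ => by positivity))
      rw [h3, intervalIntegral.integral_const_mul] at h2
      exact h2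
    have hWb : ‖∫ s in (0:ℝ)..t, w s‖ ≤ η := by
      refine (hW t ht).trans ?_
      have hT₀' : T₀ ≤ η / (Q + 1) := (hT₀δ.le).trans (min_le_right _ _)
      have h1 : Q * T₀ ≤ Q * (η / (Q + 1)) := mul_le_mul_of_nonneg_left hT₀' hQ0
      have h2 : Q * (η / (Q + 1)) ≤ η := by
        rw [mul_div_assoc'] at *
        rw [div_le_iff₀ (by linarith : (0:ℝ) < Q + 1)]
        nlinarith
      linarith
    calc ‖x t - y t‖ ≤ ‖∫ s in (0:ℝ)..t, h s‖ + ‖∫ s in (0:ℝ)..t, w s‖ := by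
          rw [hzsplit]; exact norm_add_le _ _
      _ ≤ (K * ∫ s in (0:ℝ)..t, ‖x s - y s‖) + η := add_le_add hH hWb
      _ = η + K * ∫ s in (0:ℝ)..t, ‖x s - y s‖ := by ring
  -- Grönwall wrap-up via a globally-defined comparison function
  intro t ht
  set clamp : ℝ → ℝ := fun s => max 0 (min s T) with hclampdef
  have hclampmem : ∀ s, clamp s ∈ Icc (0:ℝ) T :=
    fun s => ⟨le_max_left _ _, max_le hT.le (min_le_right _ _)⟩
  have hclampeq : ∀ s ∈ Icc (0:ℝ) T, clamp s = s := by
    intro s hs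
    rw [hclampdef]
    simp only
    rw [min_eq_left hs.2, max_eq_right hs.1]
  have hclampcont : Continuous clamp := continuous_const.max (continuous_id.min continuous_const)
  set φ : ℝ → ℝ := fun s => ‖x (clamp s) - y (clamp s)‖ with hφdef
  have hφcont : Continuous φ :=
    ((hxc.sub hyc).norm).comp_continuous hclampcont hclampmem
  have hφnonneg : ∀ s, 0 ≤ φ s := fun s => norm_nonneg _
  have hφeq : ∀ s ∈ Icc (0:ℝ) T, φ s = ‖x s - y s‖ := by
    intro s hs; rw [hφdef]; simp only; rw [hclampeq s hs]
  set Ψ : ℝ → ℝ := fun u => η + K * ∫ s in (0:ℝ)..u, φ s with hΨdef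
  have hΨd : ∀ u : ℝ, HasDerivAt Ψ (K * φ u) u := by
    intro u
    have h1 : HasDerivAt (fun v => ∫ s in (0:ℝ)..v, φ s) (φ u) u :=
      intervalIntegral.integral_hasDerivAt_right (hφcont.intervalIntegrable _ _)
        (hφcont.stronglyMeasurable.stronglyMeasurableAtFilter) hφcont.continuousAt
    exact (h1.const_mul K).const_add η
  have hφΨ : ∀ u ∈ Icc (0:ℝ) T, φ u ≤ Ψ u := by
    intro u hu
    have h2 : ∫ s in (0:ℝ)..u, φ s = ∫ s in (0:ℝ)..u, ‖x s - y s‖ := by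
      refine intervalIntegral.integral_congr (fun s hs => ?_)
      refine hφeq s ?_
      rw [Set.uIcc_of_le hu.1] at hs
      exact ⟨hs.1, hs.2.trans hu.2⟩
    rw [hφeq u hu, hΨdef]
    simp only
    rw [h2]
    exact key u hu
  have hΨpos : ∀ u ∈ Icc (0:ℝ) T, 0 ≤ Ψ u := by
    intro u hu
    have h1 : 0 ≤ ∫ s in (0:ℝ)..u, φ s :=
      intervalIntegral.integral_nonneg hu.1 (fun s _ => hφnonneg s)
    rw [hΨdef]
    simp only
    nlinarith [hη0]
  have hG := norm_le_gronwallBound_of_norm_deriv_right_le (f := Ψ)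
    (f' := fun u => K * φ u) (a := 0) (b := T) (δ := η) (K := K) (ε := 0)
    (fun u _ => (hΨd u).continuousAt.continuousWithinAt)
    (fun u _ => (hΨd u).hasDerivWithinAt)
    (by
      rw [hΨdef]
      simp only
      rw [intervalIntegral.integral_same, mul_zero, add_zero, Real.norm_eq_abs,
        abs_of_pos hη0])
    (fun u hu => by
      have h1 := hφΨ u (Ico_subset_Icc_self hu)
      have h2 := hΨpos u (Ico_subset_Icc_self hu)
      rw [Real.norm_eq_abs, Real.norm_eq_abs, abs_of_nonneg h2,
        abs_of_nonneg (by positivity : (0:ℝ) ≤ K * φ u)]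
      nlinarith [hK0, hφnonneg u])
  calc ‖x t - y t‖ = φ t := (hφeq t ht).symm
    _ ≤ Ψ t := hφΨ t ht
    _ ≤ |Ψ t| := le_abs_self _
    _ ≤ gronwallBound η K 0 (t - 0) := by
        have := hG t ht
        rwa [Real.norm_eq_abs] at this
    _ = η * Real.exp (K * t) := by rw [sub_zero, gronwallBound_ε0]
    _ ≤ η * Real.exp (K * T) := by
        refine mul_le_mul_of_nonneg_left ?_ hη0.le
        exact Real.exp_le_exp.2 (mul_le_mul_of_nonneg_left ht.2 hK0.le)
    _ = ε := by
        rw [hηdef, mul_assoc, ← Real.exp_add, neg_add_cancel, Real.exp_zero, mul_one]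
end

section
/- Let f : ℝⁿ → ℝⁿ be Lipschitz, A : ℝⁿ → ℝⁿ a linear map, x₀ ∈ ℝⁿ, T > 0, and fix real values p₁,…,p_N and positive integers m₁,…,m_N with average p* = (Σ_{k=1}^N m_k p_k)/(Σ_{k=1}^N m_k). For each step size h > 0 let p_h : ℝ → ℝ be the PS switching function determined by the scheme [m₁p₁,…,m_N p_N] with step h. Then for every ε > 0 there exists δ > 0 such that for every h ∈ (0,δ), every solution x_h of the switched system with parameter function p_h on [0,T] and every solution y of the averaged system with constant parameter p* on [0,T] satisfy sup_{t ∈ [0,T]} ‖x_h(t) − y(t)‖ ≤ ε. -/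
set_option maxHeartbeats 2000000

open Set Finset MeasureTheory intervalIntegral Real

/-- `IsPSSwitch h N pv m p` : `p : ℝ → ℝ` is the PS switching function determined by the
scheme `[m₁p₁, …, m_N p_N]` with step size `h` (indices `0, …, N-1` here): it is
`T₀`-periodic with `T₀ = h · (m₀ + ⋯ + m_{N-1})`, and within each period it equals
`pv k` on the interval `[h·s_k, h·s_{k+1})`, where `s_k = m₀ + ⋯ + m_{k-1}`. -/
def IsPSSwitch (h : ℝ) (N : ℕ) (pv : ℕ → ℝ) (m : ℕ → ℕ) (p : ℝ → ℝ) : Prop :=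
  (∀ t : ℝ, p (t + h * (∑ i ∈ Finset.range N, (m i : ℝ))) = p t) ∧
  ∀ k < N, ∀ t : ℝ,
    h * (∑ i ∈ Finset.range k, (m i : ℝ)) ≤ t →
    t < h * (∑ i ∈ Finset.range (k + 1), (m i : ℝ)) →
    p t = pv k

section
variable {h : ℝ} {N : ℕ} {pv : ℕ → ℝ} {m : ℕ → ℕ} {ph : ℝ → ℝ}

noncomputable def sf (h : ℝ) (m : ℕ → ℕ) (k : ℕ) : ℝ := h * ∑ i ∈ Finset.range k, (m i : ℝ)

lemma sf_mono (hh : 0 < h) : Monotone (sf h m) := by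
  intro a b hab
  unfold sf
  have : (∑ i ∈ Finset.range a, (m i : ℝ)) ≤ ∑ i ∈ Finset.range b, (m i : ℝ) :=
    Finset.sum_le_sum_of_subset_of_nonneg (Finset.range_subset_range.2 hab)
      (fun i _ _ => by positivity)
  nlinarith

lemma key (hh : 0 < h) (hN : 0 < N) (hm : ∀ k < N, 0 < m k)
    (hps : IsPSSwitch h N pv m ph) (t : ℝ) :
    ∃ k < N, ph t = pv k ∧
      sf h m k ≤ t - ⌊t / sf h m N⌋ * sf h m N ∧
      t - ⌊t / sf h m N⌋ * sf h m N < sf h m (k + 1) ∧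
      ∀ w, t ≤ w → w < t + (sf h m (k + 1) - (t - ⌊t / sf h m N⌋ * sf h m N)) → ph w = pv k := by
  have per : Function.Periodic ph (sf h m N) := hps.1
  have hS : 0 < sf h m N := by
    unfold sf
    have h0 : (0:ℝ) < (m 0 : ℝ) := by exact_mod_cast hm 0 hN
    have : (m 0 : ℝ) ≤ ∑ i ∈ Finset.range N, (m i : ℝ) :=
      Finset.single_le_sum (f := fun i => (m i : ℝ)) (fun i _ => by positivity)
        (Finset.mem_range.2 hN)
    nlinarith
  set T₀ := sf h m N with hT₀
  have hu0 : 0 ≤ t - ⌊t / T₀⌋ * T₀ := Int.sub_floor_div_mul_nonneg t hS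
  have huT : t - ⌊t / T₀⌋ * T₀ < T₀ := Int.sub_floor_div_mul_lt t hS
  set u := t - ⌊t / T₀⌋ * T₀ with hu
  clear_value T₀ u
  -- find k
  have hNe : N - 1 + 1 = N := by omega
  have hex : ∃ k, u < sf h m (k + 1) := ⟨N - 1, by rw [hNe, ← hT₀]; exact huT⟩
  set k := Nat.find hex with hk
  have hku : u < sf h m (k + 1) := Nat.find_spec hex
  have hkN : k < N := lt_of_le_of_lt (Nat.find_le (by rw [hNe, ← hT₀]; exact huT))
    (Nat.sub_lt hN one_pos)
  have hlow : sf h m k ≤ u := by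
    rcases Nat.eq_zero_or_pos k with hk0 | hk0
    · simpa [hk0, sf] using hu0
    · have := Nat.find_min hex (Nat.sub_lt hk0 one_pos)
      rw [← hk, show k - 1 + 1 = k from by omega] at this
      exact not_lt.1 this
  have hval : ∀ w, sf h m k ≤ w - ⌊t / T₀⌋ * T₀ → w - ⌊t / T₀⌋ * T₀ < sf h m (k + 1) → ph w = pv k := by
    intro w hw1 hw2
    have : ph (w - ⌊t / T₀⌋ * T₀) = ph w := per.sub_int_mul_eq _
    rw [← this]
    exact hps.2 k hkN _ hw1 hw2
  refine ⟨k, hkN, ?_, hlow, hku, ?_⟩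
  · exact hval t (hu ▸ hlow) (hu ▸ hku)
  · intro w hw1 hw2
    have h1 : sf h m k ≤ w - ⌊t / T₀⌋ * T₀ := by
      have : u ≤ w - ⌊t / T₀⌋ * T₀ := by simp only [hu]; linarith
      linarith
    have h2 : w - ⌊t / T₀⌋ * T₀ < sf h m (k + 1) := by
      have : w - ⌊t / T₀⌋ * T₀ = u + (w - t) := by simp only [hu]; ring
      rw [this]; linarith
    exact hval w h1 h2


variable (hh : 0 < h) (hN : 0 < N) (hm : ∀ k < N, 0 < m k) (hps : IsPSSwitch h N pv m ph)
include hh hN hm hps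

lemma ph_bound (t : ℝ) : |ph t| ≤ ∑ k ∈ Finset.range N, |pv k| := by
  obtain ⟨k, hkN, hval, -⟩ := key hh hN hm hps t
  rw [hval]
  exact Finset.single_le_sum (f := fun i => |pv i|) (fun i _ => abs_nonneg _)
    (Finset.mem_range.2 hkN)

lemma ph_measurable : Measurable ph := by
  have hrepr : ph = fun t =>
      ∑ k ∈ Finset.range N, (Set.Ico (sf h m k) (sf h m (k + 1))).indicator
        (fun _ => pv k) (t - ⌊t / sf h m N⌋ * sf h m N) := by
    funext t
    obtain ⟨k, hkN, hval, hlo, hhi, -⟩ := key hh hN hm hps t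
    rw [hval]
    rw [Finset.sum_eq_single_of_mem k (Finset.mem_range.2 hkN)]
    · exact (Set.indicator_of_mem (Set.mem_Ico.mpr ⟨hlo, hhi⟩) fun _ => pv k).symm
    · intro j hj hjk
      apply Set.indicator_of_notMem
      rcases lt_or_gt_of_ne hjk with hlt | hgt
      · rintro ⟨h1, h2⟩
        exact absurd (lt_of_lt_of_le h2 (sf_mono hh (by omega : j + 1 ≤ k))) (not_lt.2 hlo)
      · rintro ⟨h1, h2⟩
        exact absurd (lt_of_lt_of_le hhi (le_trans (sf_mono hh (by omega : k + 1 ≤ j)) h1))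
          (lt_irrefl _)
  rw [hrepr]
  have hφ : Measurable fun t : ℝ => t - (⌊t / sf h m N⌋ : ℝ) * sf h m N := by
    apply measurable_id.sub
    exact ((Measurable.of_discrete (f := (Int.cast : ℤ → ℝ))).comp
      ((measurable_id.div_const _).floor)).mul_const _
  apply Finset.measurable_sum
  intro k _
  exact ((measurable_const.indicator measurableSet_Ico).comp hφ)

lemma ph_cwa (t : ℝ) : ContinuousWithinAt ph (Set.Ici t) t := by
  obtain ⟨k, hkN, hval, hlo, hhi, hwin⟩ := key hh hN hm hps t
  have heps : 0 < sf h m (k + 1) - (t - ⌊t / sf h m N⌋ * sf h m N) := by linarith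
  have : ph =ᶠ[nhdsWithin t (Set.Ici t)] fun _ => pv k := by
    have hmem : t ∈ Set.Ico t (t + (sf h m (k + 1) - (t - ⌊t / sf h m N⌋ * sf h m N))) :=
      Set.left_mem_Ico.2 (by linarith)
    filter_upwards [Ico_mem_nhdsGE_of_mem hmem] with w hw
    exact hwin w hw.1 hw.2
  exact (continuousWithinAt_const.congr_of_eventuallyEq this hval)

lemma ph_intervalIntegrable (a b : ℝ) : IntervalIntegrable ph volume a b := by
  have hb : ∀ t, |ph t| ≤ ∑ k ∈ Finset.range N, |pv k| := ph_bound hh hN hm hps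
  have hmeas := ph_measurable hh hN hm hps
  constructor <;>
  · refine (MeasureTheory.integrable_const (∑ k ∈ Finset.range N, |pv k|)).mono'
      hmeas.aestronglyMeasurable.restrict ?_
    filter_upwards with t
    simpa using hb t
end

section
variable {h : ℝ} {N : ℕ} {pv : ℕ → ℝ} {m : ℕ → ℕ} {ph : ℝ → ℝ}
variable (hh : 0 < h) (hN : 0 < N) (hm : ∀ k < N, 0 < m k) (hps : IsPSSwitch h N pv m ph)
include hh hN hm hps

lemma ph_integral_period :
    ∫ u in (0:ℝ)..(sf h m N), ph u = h * ∑ k ∈ Finset.range N, (m k : ℝ) * pv k := by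
  have hadj := intervalIntegral.sum_integral_adjacent_intervals (μ := volume) (a := sf h m)
    (n := N) (fun i _ => ph_intervalIntegrable hh hN hm hps _ _)
  have hsf0 : sf h m 0 = 0 := by simp [sf]
  rw [hsf0] at hadj
  rw [← hadj]
  have hterm : ∀ k < N, ∫ x in sf h m k..sf h m (k + 1), ph x = h * ((m k : ℝ) * pv k) := by
    intro k hkN
    have hle : sf h m k ≤ sf h m (k + 1) := sf_mono hh (Nat.le_succ k)
    have hcong : ∫ x in sf h m k..sf h m (k + 1), ph x
        = ∫ _x in sf h m k..sf h m (k + 1), pv k := by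
      apply intervalIntegral.integral_congr_ae
      have hne : ∀ᵐ x : ℝ, x ∉ ({sf h m (k + 1)} : Set ℝ) :=
        measure_eq_zero_iff_ae_notMem.mp (measure_singleton _)
      filter_upwards [hne] with x hx hxI
      rw [Set.uIoc_of_le hle] at hxI
      exact hps.2 k hkN x hxI.1.le (lt_of_le_of_ne hxI.2 (by simpa [sf] using hx))
    rw [hcong, intervalIntegral.integral_const, smul_eq_mul]
    have : sf h m (k + 1) - sf h m k = h * (m k : ℝ) := by
      unfold sf; rw [Finset.sum_range_succ]; ring
    rw [this]; ring
  rw [Finset.sum_congr rfl (fun k hk => hterm k (Finset.mem_range.1 hk)), ← Finset.mul_sum]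
end

lemma gronwallBound_le_of_le {δ K ε x T : ℝ} (hK : 0 < K) (hδ : 0 ≤ δ) (hε : 0 ≤ ε)
    (hx : 0 ≤ x) (hxT : x ≤ T) :
    gronwallBound δ K ε x ≤ δ * Real.exp (K * T) + ε / K * (Real.exp (K * T) - 1) := by
  rw [gronwallBound_of_K_ne_0 hK.ne']
  have h1 : Real.exp (K * x) ≤ Real.exp (K * T) := Real.exp_le_exp.2 (by nlinarith)
  have h2 : (1:ℝ) ≤ Real.exp (K * x) := Real.one_le_exp (by positivity)
  have h3 : 0 ≤ ε / K := by positivity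
  nlinarith

/-- the PS algorithm converges — for every `ε > 0` there is `δ > 0` such
that for every step size `h ∈ (0, δ)`, every solution of the system switched by the PS
scheme `[m₁p₁, …, m_N p_N]` stays within `ε` of every solution of the averaged system
(with parameter `p* = (Σ m_k p_k)/(Σ m_k)`) uniformly on `[0, T]`. -/
theorem ps_algorithm_converges
    {n : ℕ} (f : EuclideanSpace ℝ (Fin n) → EuclideanSpace ℝ (Fin n))
    (L : ℝ) (hL : 0 ≤ L) (hf : LipschitzWith L.toNNReal f)
    (A : EuclideanSpace ℝ (Fin n) →ₗ[ℝ] EuclideanSpace ℝ (Fin n))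
    (x₀ : EuclideanSpace ℝ (Fin n)) (T : ℝ) (hT : 0 < T)
    (N : ℕ) (hN : 0 < N) (pv : ℕ → ℝ) (m : ℕ → ℕ) (hm : ∀ k < N, 0 < m k)
    (pstar : ℝ)
    (hpstar : pstar =
      (∑ k ∈ Finset.range N, (m k : ℝ) * pv k) / (∑ k ∈ Finset.range N, (m k : ℝ))) :
    ∀ ε > 0, ∃ δ > 0, ∀ h : ℝ, 0 < h → h < δ →
      ∀ ph : ℝ → ℝ, IsPSSwitch h N pv m ph →
      ∀ x y : ℝ → EuclideanSpace ℝ (Fin n),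
        x 0 = x₀ →
        (∀ t ∈ Set.Icc (0 : ℝ) T, HasDerivAt x (f (x t) + ph t • A (x t)) t) →
        y 0 = x₀ →
        (∀ t ∈ Set.Icc (0 : ℝ) T, HasDerivAt y (f (y t) + pstar • A (y t)) t) →
        ∀ t ∈ Set.Icc (0 : ℝ) T, ‖x t - y t‖ ≤ ε := by
  intro ε hε
  obtain ⟨Ac, hAc⟩ : ∃ c : EuclideanSpace ℝ (Fin n) →L[ℝ] EuclideanSpace ℝ (Fin n),
      c = LinearMap.toContinuousLinearMap A := ⟨_, rfl⟩
  have hAeq : ∀ v : EuclideanSpace ℝ (Fin n), A v = Ac v := fun v => by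
    rw [hAc, LinearMap.coe_toContinuousLinearMap']
  obtain ⟨nA, hnA⟩ : ∃ c : ℝ, c = ‖Ac‖ := ⟨_, rfl⟩
  have hnA0 : 0 ≤ nA := hnA ▸ norm_nonneg Ac
  obtain ⟨P, hPdef⟩ : ∃ c : ℝ, c = ∑ k ∈ Finset.range N, |pv k| := ⟨_, rfl⟩
  have hP : 0 ≤ P := hPdef ▸ Finset.sum_nonneg fun k _ => abs_nonneg _
  obtain ⟨B, hBdef⟩ : ∃ c : ℝ, c = P + |pstar| := ⟨_, rfl⟩
  have hB : 0 ≤ B := by rw [hBdef]; positivity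
  obtain ⟨S, hSdef⟩ : ∃ c : ℝ, c = ∑ i ∈ Finset.range N, (m i : ℝ) := ⟨_, rfl⟩
  have hS : 0 < S := by
    have h0 : (0:ℝ) < (m 0 : ℝ) := by exact_mod_cast hm 0 hN
    have h1 : (m 0 : ℝ) ≤ ∑ i ∈ Finset.range N, (m i : ℝ) :=
      Finset.single_le_sum (f := fun i => (m i : ℝ)) (fun i _ => by positivity)
        (Finset.mem_range.2 hN)
    rw [hSdef]; linarith
  obtain ⟨K', hK'def⟩ : ∃ c : ℝ, c = L + |pstar| * nA + 1 := ⟨_, rfl⟩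
  have hK' : 0 < K' := by rw [hK'def]; positivity
  obtain ⟨Mf, hMfdef⟩ : ∃ c : ℝ, c = ‖f 0‖ := ⟨_, rfl⟩
  have hMf : 0 ≤ Mf := hMfdef ▸ norm_nonneg _
  obtain ⟨My, hMydef⟩ : ∃ c : ℝ,
      c = ‖x₀‖ * Real.exp (K' * T) + Mf / K' * (Real.exp (K' * T) - 1) := ⟨_, rfl⟩
  have hMy : 0 ≤ My := by
    have h2 : (1:ℝ) ≤ Real.exp (K' * T) := Real.one_le_exp (by positivity)
    have t1 : 0 ≤ ‖x₀‖ * Real.exp (K' * T) := by positivity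
    have t2 : 0 ≤ Mf / K' * (Real.exp (K' * T) - 1) :=
      mul_nonneg (by positivity) (by linarith)
    rw [hMydef]; linarith
  obtain ⟨My', hMy'def⟩ : ∃ c : ℝ, c = Mf + K' * My := ⟨_, rfl⟩
  have hMy' : 0 ≤ My' := by rw [hMy'def]; positivity
  obtain ⟨MA, hMAdef⟩ : ∃ c : ℝ, c = nA * My := ⟨_, rfl⟩
  have hMA : 0 ≤ MA := by rw [hMAdef]; positivity
  obtain ⟨MA', hMA'def⟩ : ∃ c : ℝ, c = nA * My' := ⟨_, rfl⟩
  have hMA'0 : 0 ≤ MA' := by rw [hMA'def]; positivity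
  obtain ⟨K, hKdef⟩ : ∃ c : ℝ, c = L + P * nA + 1 := ⟨_, rfl⟩
  have hK : 0 < K := by rw [hKdef]; positivity
  obtain ⟨Cr, hCrdef⟩ : ∃ c : ℝ, c = S * B * (MA + T * MA') := ⟨_, rfl⟩
  have hCr : 0 ≤ Cr := by rw [hCrdef]; positivity
  obtain ⟨D, hDdef⟩ : ∃ c : ℝ, c = Cr * Real.exp (K * T) + 1 := ⟨_, rfl⟩
  have hD : 0 < D := by rw [hDdef]; positivity
  refine ⟨ε / D, by positivity, ?_⟩
  intro h hh hhδ ph hps x y hx0 hx hy0 hy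
  -- basic facts
  have hLip : ∀ a b : EuclideanSpace ℝ (Fin n), ‖f a - f b‖ ≤ L * ‖a - b‖ := by
    intro a b
    have := hf.dist_le_mul a b
    rwa [dist_eq_norm, dist_eq_norm, Real.coe_toNNReal L hL] at this
  have hAb : ∀ v : EuclideanSpace ℝ (Fin n), ‖A v‖ ≤ nA * ‖v‖ := fun v => by
    rw [hAeq, hnA]; exact Ac.le_opNorm v
  have hphb : ∀ t, |ph t| ≤ P := hPdef ▸ ph_bound hh hN hm hps
  have hphm : Measurable ph := ph_measurable hh hN hm hps
  have hsfN : sf h m N = h * S := by rw [hSdef]; rfl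
  have hT₀ : 0 < h * S := by positivity
  have hxc : ContinuousOn x (Set.Icc 0 T) := fun t ht =>
    ((hx t ht).continuousAt).continuousWithinAt
  have hyc : ContinuousOn y (Set.Icc 0 T) := fun t ht =>
    ((hy t ht).continuousAt).continuousWithinAt
  -- a priori bound on y
  have hy'le : ∀ t ∈ Set.Icc (0:ℝ) T, ‖f (y t) + pstar • A (y t)‖ ≤ K' * ‖y t‖ + ‖f 0‖ := by
    intro t ht
    have h1 := norm_add_le (f (y t)) (pstar • A (y t))
    have h3 := norm_sub_norm_le (f (y t)) (f 0)
    have h5 := hLip (y t) 0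
    rw [sub_zero] at h5
    have h4 : ‖pstar • A (y t)‖ = |pstar| * ‖A (y t)‖ := by
      rw [norm_smul, Real.norm_eq_abs]
    have h6 : |pstar| * ‖A (y t)‖ ≤ |pstar| * (nA * ‖y t‖) :=
      mul_le_mul_of_nonneg_left (hAb (y t)) (abs_nonneg _)
    rw [hK'def]
    linarith [h1, h3, h4, h5, h6, norm_nonneg (y t)]
  have hybnd : ∀ t ∈ Set.Icc (0:ℝ) T, ‖y t‖ ≤ My := by
    have hgr := norm_le_gronwallBound_of_norm_deriv_right_le (a := 0) (b := T)
      (f := y) (f' := fun t => f (y t) + pstar • A (y t)) (δ := ‖x₀‖) (K := K') (ε := Mf)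
      hyc (fun t ht => (hy t (Set.Ico_subset_Icc_self ht)).hasDerivWithinAt)
      (le_of_eq (by rw [hy0]))
      (fun t ht => hMfdef ▸ hy'le t (Set.Ico_subset_Icc_self ht))
    intro t ht
    have h1 := hgr t ht
    rw [sub_zero] at h1
    refine le_trans h1 (le_trans (gronwallBound_le_of_le hK' (norm_nonneg x₀) hMf
      ht.1 ht.2) (le_of_eq hMydef.symm))
  have hy'bnd : ∀ t ∈ Set.Icc (0:ℝ) T, ‖f (y t) + pstar • A (y t)‖ ≤ My' := by
    intro t ht
    calc ‖f (y t) + pstar • A (y t)‖ ≤ K' * ‖y t‖ + ‖f 0‖ := hy'le t ht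
      _ ≤ K' * My + ‖f 0‖ := by nlinarith [hybnd t ht]
      _ = My' := by rw [hMy'def, hMfdef]; ring
  -- Q machinery
  have hQig : ∀ a b : ℝ, IntervalIntegrable (fun s => ph s - pstar) volume a b := fun a b =>
    (ph_intervalIntegrable hh hN hm hps a b).sub intervalIntegrable_const
  obtain ⟨Q, hQdef⟩ : ∃ Q : ℝ → ℝ, Q = fun t => ∫ s in (0:ℝ)..t, (ph s - pstar) := ⟨_, rfl⟩
  have hQdiff : ∀ a b : ℝ, Q b - Q a = ∫ s in a..b, (ph s - pstar) := by
    intro a b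
    rw [hQdef]
    simp only
    rw [← intervalIntegral.integral_add_adjacent_intervals (hQig 0 a) (hQig a b)]
    ring
  have hQ0 : Q 0 = 0 := by rw [hQdef]; simp
  have hbnd1 : ∀ a b : ℝ, |∫ s in a..b, (ph s - pstar)| ≤ B * |b - a| := by
    intro a b
    have h2 : ∀ s ∈ Set.uIoc a b, ‖ph s - pstar‖ ≤ B := by
      intro s _
      rw [Real.norm_eq_abs, hBdef]
      have h3 : |ph s - pstar| ≤ |ph s| + |pstar| := by
        simpa [sub_eq_add_neg] using abs_add_le (ph s) (-pstar)
      linarith [hphb s]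
    simpa using intervalIntegral.norm_integral_le_of_norm_le_const h2
  have hper' : Function.Periodic (fun s => ph s - pstar) (h * S) := by
    intro t
    simp only
    have h1 : h * S = h * ∑ i ∈ Finset.range N, (m i : ℝ) := by rw [hSdef]
    rw [h1, hps.1 t]
  have hint0 : ∫ s in (0:ℝ)..(h * S), (ph s - pstar) = 0 := by
    rw [intervalIntegral.integral_sub (ph_intervalIntegrable hh hN hm hps _ _)
      intervalIntegrable_const, ← hsfN, ph_integral_period hh hN hm hps,
      intervalIntegral.integral_const, hsfN]
    have hS0 : (∑ i ∈ Finset.range N, (m i : ℝ)) ≠ 0 := by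
      rw [← hSdef]; exact hS.ne'
    have hsum : ∑ k ∈ Finset.range N, (m k : ℝ) * pv k = pstar * S := by
      rw [hpstar, hSdef, div_mul_cancel₀ _ hS0]
    rw [hsum, smul_eq_mul]
    ring
  have hQper : Function.Periodic Q (h * S) := by
    intro t
    have h1 := hQdiff t (t + h * S)
    rw [hper'.intervalIntegral_add_eq t 0, zero_add, hint0] at h1
    linarith
  have hQbnd : ∀ t : ℝ, |Q t| ≤ h * (S * B) := by
    intro t
    have hu0 : 0 ≤ t - ⌊t / (h * S)⌋ * (h * S) := Int.sub_floor_div_mul_nonneg t hT₀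
    have huT : t - ⌊t / (h * S)⌋ * (h * S) < h * S := Int.sub_floor_div_mul_lt t hT₀
    have hQt : Q (t - ⌊t / (h * S)⌋ * (h * S)) = Q t := hQper.sub_int_mul_eq _
    rw [← hQt]
    have h1 := hQdiff 0 (t - ⌊t / (h * S)⌋ * (h * S))
    rw [hQ0, sub_zero] at h1
    rw [h1]
    calc |∫ s in (0:ℝ)..(t - ⌊t / (h * S)⌋ * (h * S)), (ph s - pstar)|
        ≤ B * |t - ⌊t / (h * S)⌋ * (h * S) - 0| := hbnd1 _ _
      _ ≤ h * (S * B) := by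
          rw [sub_zero, abs_of_nonneg hu0]
          calc B * (t - ⌊t / (h * S)⌋ * (h * S)) ≤ B * (h * S) :=
                mul_le_mul_of_nonneg_left huT.le hB
            _ = h * (S * B) := by ring
  have hQd : ∀ t : ℝ, HasDerivWithinAt Q (ph t - pstar) (Set.Ici t) t := by
    intro t
    rw [hQdef]
    exact intervalIntegral.integral_hasDerivWithinAt_right (hQig 0 t)
      ⟨Set.univ, Filter.univ_mem, ((hphm.sub measurable_const).aestronglyMeasurable).restrict⟩
      (((ph_cwa hh hN hm hps t).sub continuousWithinAt_const).mono Set.Ioi_subset_Ici_self)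
  have hQcont : Continuous Q := by
    have hlip : LipschitzWith B.toNNReal Q := by
      apply LipschitzWith.of_dist_le_mul
      intro a b
      rw [Real.dist_eq, Real.dist_eq]
      calc |Q a - Q b| = |∫ s in b..a, (ph s - pstar)| := by rw [hQdiff b a]
        _ ≤ B * |a - b| := hbnd1 b a
        _ ≤ B.toNNReal * |a - b| := by rw [Real.coe_toNNReal B hB]
    exact hlip.continuous
  -- the perturbation integral r and its bound via integration by parts
  have hAcont : Continuous (⇑A : EuclideanSpace ℝ (Fin n) → EuclideanSpace ℝ (Fin n)) :=
    A.continuous_of_finiteDimensional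
  have hAyc : ContinuousOn (fun s => A (y s)) (Set.Icc 0 T) := hAcont.comp_continuousOn hyc
  have hsubIcc : ∀ a b : ℝ, a ∈ Set.Icc (0:ℝ) T → b ∈ Set.Icc (0:ℝ) T →
      Set.uIoc a b ⊆ Set.Icc 0 T := fun a b ha hb =>
    Set.uIoc_subset_uIcc.trans (Set.uIcc_subset_Icc ha hb)
  have hg₁bnd : ∀ s ∈ Set.Icc (0:ℝ) T, ‖(ph s - pstar) • A (y s)‖ ≤ B * MA := by
    intro s hs
    rw [norm_smul, Real.norm_eq_abs]
    have h3 : |ph s - pstar| ≤ B := by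
      have h4 : |ph s - pstar| ≤ |ph s| + |pstar| := by
        simpa [sub_eq_add_neg] using abs_add_le (ph s) (-pstar)
      rw [hBdef]; linarith [hphb s]
    have h5 : ‖A (y s)‖ ≤ MA := by
      rw [hMAdef]
      calc ‖A (y s)‖ ≤ nA * ‖y s‖ := hAb (y s)
        _ ≤ nA * My := mul_le_mul_of_nonneg_left (hybnd s hs) hnA0
    exact mul_le_mul h3 h5 (norm_nonneg _) hB
  have hg₁int : ∀ a b : ℝ, Set.uIoc a b ⊆ Set.Icc 0 T →
      IntervalIntegrable (fun s => (ph s - pstar) • A (y s)) volume a b := by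
    intro a b hsub
    rw [intervalIntegrable_iff]
    apply MeasureTheory.Integrable.mono' (g := fun _ => B * MA)
      (integrableOn_const (C := B * MA) measure_Ioc_lt_top.ne)
    · exact ((hphm.sub measurable_const).aestronglyMeasurable.restrict).smul
        ((hAyc.mono hsub).aestronglyMeasurable measurableSet_uIoc)
    · exact (MeasureTheory.ae_restrict_iff' measurableSet_uIoc).2
        (Filter.Eventually.of_forall fun s hs => hg₁bnd s (hsub hs))
  have hy'c : ContinuousOn (fun s => f (y s) + pstar • A (y s)) (Set.Icc 0 T) :=
    (hf.continuous.comp_continuousOn hyc).add (hAyc.const_smul pstar)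
  have hrparts : ∀ t ∈ Set.Icc (0:ℝ) T,
      (∫ s in (0:ℝ)..t, (ph s - pstar) • A (y s)) =
        Q t • A (y t) - ∫ s in (0:ℝ)..t, Q s • A (f (y s) + pstar • A (y s)) := by
    intro t ht
    have h0T : (0:ℝ) ∈ Set.Icc (0:ℝ) T := ⟨le_rfl, hT.le⟩
    have hQAy'int : IntervalIntegrable
        (fun s => Q s • A (f (y s) + pstar • A (y s))) volume 0 t := by
      apply ContinuousOn.intervalIntegrable
      exact (hQcont.continuousOn.smul (hAcont.comp_continuousOn hy'c)).mono
        (Set.uIcc_subset_Icc h0T ht)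
    have hG'int : IntervalIntegrable
        (fun s => Q s • A (f (y s) + pstar • A (y s)) + (ph s - pstar) • A (y s))
        volume 0 t := hQAy'int.add (hg₁int 0 t (hsubIcc 0 t h0T ht))
    have hGc : ContinuousOn (fun s => Q s • A (y s)) (Set.Icc 0 t) :=
      hQcont.continuousOn.smul (hAyc.mono (Set.Icc_subset_Icc le_rfl ht.2))
    have hGd : ∀ u ∈ Set.Ioo (0:ℝ) t, HasDerivWithinAt (fun s => Q s • A (y s))
        (Q u • A (f (y u) + pstar • A (y u)) + (ph u - pstar) • A (y u))
        (Set.Ioi u) u := by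
      intro u hu
      have hyu : HasDerivAt y (f (y u) + pstar • A (y u)) u :=
        hy u ⟨hu.1.le, hu.2.le.trans ht.2⟩
      have hAyd : HasDerivAt (fun s => A (y s)) (A (f (y u) + pstar • A (y u))) u := by
        have h2 := (Ac.hasFDerivAt (x := y u)).comp_hasDerivAt u hyu
        simp only [Function.comp_def, ← hAeq] at h2
        exact h2
      exact ((hQd u).mono Set.Ioi_subset_Ici_self).smul hAyd.hasDerivWithinAt
    have hftc := intervalIntegral.integral_eq_sub_of_hasDeriv_right_of_le ht.1 hGc hGd hG'int
    rw [intervalIntegral.integral_add hQAy'int (hg₁int 0 t (hsubIcc 0 t h0T ht))] at hftc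
    rw [hQ0, zero_smul, sub_zero] at hftc
    rw [eq_sub_iff_add_eq, add_comm]
    exact hftc
  have hrbnd : ∀ t ∈ Set.Icc (0:ℝ) T,
      ‖∫ s in (0:ℝ)..t, (ph s - pstar) • A (y s)‖ ≤ h * Cr := by
    intro t ht
    rw [hrparts t ht]
    have h1 : ‖Q t • A (y t)‖ ≤ (h * (S * B)) * MA := by
      rw [norm_smul, Real.norm_eq_abs]
      have h5 : ‖A (y t)‖ ≤ MA := by
        rw [hMAdef]
        calc ‖A (y t)‖ ≤ nA * ‖y t‖ := hAb (y t)
          _ ≤ nA * My := mul_le_mul_of_nonneg_left (hybnd t ht) hnA0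
      exact mul_le_mul (hQbnd t) h5 (norm_nonneg _) (by positivity)
    have h2 : ‖∫ s in (0:ℝ)..t, Q s • A (f (y s) + pstar • A (y s))‖
        ≤ (h * (S * B)) * MA' * |t - 0| := by
      apply intervalIntegral.norm_integral_le_of_norm_le_const
      intro s hs
      have hsIcc : s ∈ Set.Icc (0:ℝ) T := hsubIcc 0 t ⟨le_rfl, hT.le⟩ ht hs
      rw [norm_smul, Real.norm_eq_abs]
      have h5 : ‖A (f (y s) + pstar • A (y s))‖ ≤ MA' := by
        rw [hMA'def]
        calc ‖A (f (y s) + pstar • A (y s))‖ ≤ nA * ‖f (y s) + pstar • A (y s)‖ := hAb _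
          _ ≤ nA * My' := mul_le_mul_of_nonneg_left (hy'bnd s hsIcc) hnA0
      exact mul_le_mul (hQbnd s) h5 (norm_nonneg _) (by positivity)
    have h3 : |t - 0| ≤ T := by
      rw [sub_zero, abs_of_nonneg ht.1]; exact ht.2
    have h4 : (h * (S * B)) * MA' * |t - 0| ≤ (h * (S * B)) * MA' * T :=
      mul_le_mul_of_nonneg_left h3 (by positivity)
    calc ‖Q t • A (y t) - ∫ s in (0:ℝ)..t, Q s • A (f (y s) + pstar • A (y s))‖
        ≤ ‖Q t • A (y t)‖ + ‖∫ s in (0:ℝ)..t, Q s • A (f (y s) + pstar • A (y s))‖ :=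
          norm_sub_le _ _
      _ ≤ (h * (S * B)) * MA + (h * (S * B)) * MA' * T := by linarith
      _ = h * Cr := by rw [hCrdef]; ring
  -- right derivative and continuity of the perturbation primitive
  have hrd : ∀ t ∈ Set.Ico (0:ℝ) T, HasDerivWithinAt
      (fun u => ∫ s in (0:ℝ)..u, (ph s - pstar) • A (y s))
      ((ph t - pstar) • A (y t)) (Set.Ici t) t := by
    intro t ht
    have htIcc : t ∈ Set.Icc (0:ℝ) T := ⟨ht.1, ht.2.le⟩
    refine intervalIntegral.integral_hasDerivWithinAt_right
      (hg₁int 0 t (hsubIcc 0 t ⟨le_rfl, hT.le⟩ htIcc)) ⟨Set.Icc t T, ?_, ?_⟩ ?_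
    · exact Icc_mem_nhdsGT_of_mem ⟨le_rfl, ht.2⟩
    · exact ((hphm.sub measurable_const).aestronglyMeasurable.restrict).smul
        ((hAyc.mono (Set.Icc_subset_Icc ht.1 le_rfl)).aestronglyMeasurable measurableSet_Icc)
    · exact (((ph_cwa hh hN hm hps t).sub continuousWithinAt_const).smul
        ((hAcont.continuousAt.comp (hy t htIcc).continuousAt).continuousWithinAt)).mono
        Set.Ioi_subset_Ici_self
  have hrcont : ContinuousOn (fun u => ∫ s in (0:ℝ)..u, (ph s - pstar) • A (y s))
      (Set.Icc 0 T) := by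
    refine LipschitzOnWith.continuousOn (K := (B * MA).toNNReal) ?_
    apply LipschitzOnWith.of_dist_le_mul
    intro a ha b hb
    rw [dist_eq_norm, Real.dist_eq]
    have hdiff : (∫ s in (0:ℝ)..a, (ph s - pstar) • A (y s))
        - (∫ s in (0:ℝ)..b, (ph s - pstar) • A (y s))
        = ∫ s in b..a, (ph s - pstar) • A (y s) := by
      rw [← intervalIntegral.integral_add_adjacent_intervals
        (hg₁int 0 b (hsubIcc 0 b ⟨le_rfl, hT.le⟩ hb)) (hg₁int b a (hsubIcc b a hb ha))]
      abel
    rw [hdiff]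
    have := intervalIntegral.norm_integral_le_of_norm_le_const (C := B * MA)
      (fun s hs => hg₁bnd s (hsubIcc b a hb ha hs))
    calc ‖∫ s in b..a, (ph s - pstar) • A (y s)‖ ≤ (B * MA) * |a - b| := this
      _ ≤ ((B * MA).toNNReal : ℝ) * |a - b| := by
          rw [Real.coe_toNNReal _ (by positivity : (0:ℝ) ≤ B * MA)]
  -- Gronwall for w = x - y - r
  have hwcont : ContinuousOn
      (fun u => x u - y u - ∫ s in (0:ℝ)..u, (ph s - pstar) • A (y s)) (Set.Icc 0 T) :=
    (hxc.sub hyc).sub hrcont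
  have hw0 : ‖x 0 - y 0 - ∫ s in (0:ℝ)..(0:ℝ), (ph s - pstar) • A (y s)‖ ≤ 0 := by
    rw [hx0, hy0, intervalIntegral.integral_same]
    simp
  have hwd : ∀ t ∈ Set.Ico (0:ℝ) T, HasDerivWithinAt
      (fun u => x u - y u - ∫ s in (0:ℝ)..u, (ph s - pstar) • A (y s))
      ((f (x t) + ph t • A (x t)) - (f (y t) + pstar • A (y t)) - (ph t - pstar) • A (y t))
      (Set.Ici t) t := by
    intro t ht
    have htIcc : t ∈ Set.Icc (0:ℝ) T := ⟨ht.1, ht.2.le⟩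
    exact (((hx t htIcc).hasDerivWithinAt.sub (hy t htIcc).hasDerivWithinAt).sub (hrd t ht))
  have hwbnd : ∀ t ∈ Set.Ico (0:ℝ) T,
      ‖(f (x t) + ph t • A (x t)) - (f (y t) + pstar • A (y t)) - (ph t - pstar) • A (y t)‖
      ≤ K * ‖x t - y t - ∫ s in (0:ℝ)..t, (ph s - pstar) • A (y s)‖ + K * (h * Cr) := by
    intro t ht
    have htIcc : t ∈ Set.Icc (0:ℝ) T := ⟨ht.1, ht.2.le⟩
    have heq : (f (x t) + ph t • A (x t)) - (f (y t) + pstar • A (y t))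
        - (ph t - pstar) • A (y t)
        = (f (x t) - f (y t)) + ph t • (A (x t) - A (y t)) := by module
    rw [heq]
    have h1 : ‖f (x t) - f (y t)‖ ≤ L * ‖x t - y t‖ := hLip _ _
    have h2 : ‖A (x t) - A (y t)‖ ≤ nA * ‖x t - y t‖ := by
      rw [← map_sub]
      exact hAb _
    have h3 : ‖ph t • (A (x t) - A (y t))‖ ≤ P * (nA * ‖x t - y t‖) := by
      rw [norm_smul, Real.norm_eq_abs]
      exact mul_le_mul (hphb t) h2 (norm_nonneg _) hP
    have h4 : ‖x t - y t‖ ≤ ‖x t - y t - ∫ s in (0:ℝ)..t, (ph s - pstar) • A (y s)‖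
        + h * Cr := by
      have h5 := norm_sub_le (x t - y t - ∫ s in (0:ℝ)..t, (ph s - pstar) • A (y s))
        (-(∫ s in (0:ℝ)..t, (ph s - pstar) • A (y s)))
      have h6 : x t - y t - (∫ s in (0:ℝ)..t, (ph s - pstar) • A (y s))
          - (-(∫ s in (0:ℝ)..t, (ph s - pstar) • A (y s))) = x t - y t := by abel
      rw [h6, norm_neg] at h5
      linarith [hrbnd t htIcc]
    have h7 : ‖(f (x t) - f (y t)) + ph t • (A (x t) - A (y t))‖
        ≤ (L + P * nA) * ‖x t - y t‖ := by
      calc ‖(f (x t) - f (y t)) + ph t • (A (x t) - A (y t))‖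
          ≤ ‖f (x t) - f (y t)‖ + ‖ph t • (A (x t) - A (y t))‖ := norm_add_le _ _
        _ ≤ (L + P * nA) * ‖x t - y t‖ := by rw [add_mul]; nlinarith
    have h8 : (0:ℝ) ≤ L + P * nA := by positivity
    have h9 : L + P * nA ≤ K := by rw [hKdef]; linarith
    calc ‖(f (x t) - f (y t)) + ph t • (A (x t) - A (y t))‖
        ≤ (L + P * nA) * ‖x t - y t‖ := h7
      _ ≤ K * ‖x t - y t‖ := mul_le_mul_of_nonneg_right h9 (norm_nonneg _)
      _ ≤ K * (‖x t - y t - ∫ s in (0:ℝ)..t, (ph s - pstar) • A (y s)‖ + h * Cr) :=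
          mul_le_mul_of_nonneg_left h4 hK.le
      _ = K * ‖x t - y t - ∫ s in (0:ℝ)..t, (ph s - pstar) • A (y s)‖ + K * (h * Cr) := by
          ring
  have hgrw := norm_le_gronwallBound_of_norm_deriv_right_le (a := 0) (b := T)
    (δ := 0) (K := K) (ε := K * (h * Cr)) hwcont hwd hw0 hwbnd
  -- conclusion
  intro t ht
  have h1 := hgrw t ht
  rw [sub_zero] at h1
  have h2 : gronwallBound 0 K (K * (h * Cr)) t
      ≤ 0 * Real.exp (K * T) + (K * (h * Cr)) / K * (Real.exp (K * T) - 1) :=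
    gronwallBound_le_of_le hK le_rfl (by positivity) ht.1 ht.2
  have h3 : (K * (h * Cr)) / K = h * Cr := by
    field_simp
  rw [zero_mul, zero_add, h3] at h2
  have h4 : ‖x t - y t‖ ≤ ‖x t - y t - ∫ s in (0:ℝ)..t, (ph s - pstar) • A (y s)‖
      + h * Cr := by
    have h5 := norm_sub_le (x t - y t - ∫ s in (0:ℝ)..t, (ph s - pstar) • A (y s))
      (-(∫ s in (0:ℝ)..t, (ph s - pstar) • A (y s)))
    have h6 : x t - y t - (∫ s in (0:ℝ)..t, (ph s - pstar) • A (y s))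
        - (-(∫ s in (0:ℝ)..t, (ph s - pstar) • A (y s))) = x t - y t := by abel
    rw [h6, norm_neg] at h5
    linarith [hrbnd t ht]
  have h7 : ‖x t - y t‖ ≤ h * Cr * (Real.exp (K * T) - 1) + h * Cr := by linarith
  have h8 : h * Cr * (Real.exp (K * T) - 1) + h * Cr = h * (Cr * Real.exp (K * T)) := by ring
  rw [h8] at h7
  have h9 : h * (Cr * Real.exp (K * T)) ≤ h * D := by
    apply mul_le_mul_of_nonneg_left _ hh.le
    rw [hDdef]
    linarith
  have h10 : h * D < ε := by
    have h11 : h * D < (ε / D) * D := mul_lt_mul_of_pos_right hhδ hD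
    have h12 : (ε / D) * D = ε := by field_simp
    linarith
  linarith
end

section
/- Let f : ℝⁿ → ℝⁿ be Lipschitz with constant L ≥ 0, A : ℝⁿ → ℝⁿ a continuous linear map with operator norm ‖A‖, M > 0, and let p : ℝ → ℝ be measurable with |p(t)| ≤ M for t ∈ [0,T], and p* ∈ ℝ. Suppose x, y : ℝ → ℝⁿ satisfy x′(t) = f(x(t)) + p(t)·A x(t) and y′(t) = f(y(t)) + p*·A y(t) for all t ∈ [0,T]. Then for every t ∈ [0,T], ‖x(t) − y(t)‖ ≤ e^{(L + M‖A‖)t} · ( ‖x(0) − y(0)‖ + ‖A‖ · ∫₀^t |p(s) − p*|·‖y(s)‖ ds ). -/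
open MeasureTheory intervalIntegral Set


/-- Grönwall-type estimate comparing a solution of the switched system
`x′ = f(x) + p(t)·A x` with a solution of the averaged system `y′ = f(y) + p*·A y`:
`‖x(t) − y(t)‖ ≤ e^{(L + M‖A‖)t} (‖x(0) − y(0)‖ + ‖A‖ ∫₀ᵗ |p(s) − p*| ‖y(s)‖ ds)`. -/
theorem ps_gronwall_estimate
    {n : ℕ} (f : EuclideanSpace ℝ (Fin n) → EuclideanSpace ℝ (Fin n))
    (L : ℝ) (hL : 0 ≤ L) (hf : LipschitzWith L.toNNReal f)
    (A : EuclideanSpace ℝ (Fin n) →L[ℝ] EuclideanSpace ℝ (Fin n))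
    (M T : ℝ) (hM : 0 < M) (hT : 0 < T)
    (p : ℝ → ℝ) (hmeas : Measurable p) (hbd : ∀ t ∈ Set.Icc (0 : ℝ) T, |p t| ≤ M)
    (pstar : ℝ) (x y : ℝ → EuclideanSpace ℝ (Fin n))
    (hx : ∀ t ∈ Set.Icc (0 : ℝ) T, HasDerivAt x (f (x t) + p t • A (x t)) t)
    (hy : ∀ t ∈ Set.Icc (0 : ℝ) T, HasDerivAt y (f (y t) + pstar • A (y t)) t) :
    ∀ t ∈ Set.Icc (0 : ℝ) T,
      ‖x t - y t‖ ≤ Real.exp ((L + M * ‖A‖) * t) *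
        (‖x 0 - y 0‖ + ‖A‖ * ∫ s in (0 : ℝ)..t, |p s - pstar| * ‖y s‖) := by
  set K : ℝ := L + M * ‖A‖ with hK
  have hK0 : 0 ≤ K := by positivity
  -- continuity of x and y on Icc 0 T
  have hxc : ContinuousOn x (Icc (0:ℝ) T) := fun t ht =>
    ((hx t ht).continuousAt).continuousWithinAt
  have hyc : ContinuousOn y (Icc (0:ℝ) T) := fun t ht =>
    ((hy t ht).continuousAt).continuousWithinAt
  set z : ℝ → EuclideanSpace ℝ (Fin n) := fun t => x t - y t with hzdef
  set z' : ℝ → EuclideanSpace ℝ (Fin n) :=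
    fun t => (f (x t) + p t • A (x t)) - (f (y t) + pstar • A (y t)) with hz'def
  have hz : ∀ t ∈ Icc (0:ℝ) T, HasDerivAt z (z' t) t := fun t ht =>
    (hx t ht).sub (hy t ht)
  have hzc : ContinuousOn z (Icc (0:ℝ) T) := hxc.sub hyc
  set v : ℝ → ℝ := fun t => ‖z t‖ with hvdef
  have hvc : ContinuousOn v (Icc (0:ℝ) T) := hzc.norm
  set h : ℝ → ℝ := fun s => ‖A‖ * (|p s - pstar| * ‖y s‖) with hhdef
  have hh0 : ∀ s, 0 ≤ h s := fun s => by positivity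
  -- pointwise derivative bound
  have hbound : ∀ s ∈ Icc (0:ℝ) T, ‖z' s‖ ≤ K * v s + h s := by
    intro s hs
    have hzeq : z' s = (f (x s) - f (y s)) + (p s • (A (x s) - A (y s))
        + (p s - pstar) • A (y s)) := by
      simp only [hz'def, smul_sub, sub_smul]
      abel
    rw [hzeq]
    have h1 : ‖f (x s) - f (y s)‖ ≤ L * v s := by
      have := hf.dist_le_mul (x s) (y s)
      rw [Real.coe_toNNReal L hL] at this
      simpa [dist_eq_norm, hvdef, hzdef] using this
    have h2 : ‖p s • (A (x s) - A (y s))‖ ≤ M * ‖A‖ * v s := by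
      rw [norm_smul]
      have hA : ‖A (x s) - A (y s)‖ ≤ ‖A‖ * v s := by
        rw [← map_sub]
        exact A.le_opNorm _
      calc ‖p s‖ * ‖A (x s) - A (y s)‖ ≤ M * (‖A‖ * v s) := by
            apply mul_le_mul (hbd s hs) hA (norm_nonneg _) hM.le
        _ = M * ‖A‖ * v s := by ring
    have h3 : ‖(p s - pstar) • A (y s)‖ ≤ h s := by
      rw [norm_smul]
      have hA : ‖A (y s)‖ ≤ ‖A‖ * ‖y s‖ := A.le_opNorm _
      calc ‖p s - pstar‖ * ‖A (y s)‖ ≤ |p s - pstar| * (‖A‖ * ‖y s‖) := by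
            apply mul_le_mul le_rfl hA (norm_nonneg _) (abs_nonneg _)
        _ = h s := by rw [hhdef]; ring
    calc ‖(f (x s) - f (y s)) + (p s • (A (x s) - A (y s)) + (p s - pstar) • A (y s))‖
        ≤ ‖f (x s) - f (y s)‖ + (‖p s • (A (x s) - A (y s))‖ + ‖(p s - pstar) • A (y s)‖) :=
          (norm_add_le _ _).trans (by gcongr; exact norm_add_le _ _)
      _ ≤ L * v s + (M * ‖A‖ * v s + h s) := by gcongr
      _ = K * v s + h s := by rw [hK]; ring
  -- integrability facts on Icc 0 T
  have hIccMeas : MeasurableSet (Icc (0:ℝ) T) := measurableSet_Icc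
  have hxm : AEStronglyMeasurable x (volume.restrict (Icc (0:ℝ) T)) :=
    hxc.aestronglyMeasurable hIccMeas
  have hym : AEStronglyMeasurable y (volume.restrict (Icc (0:ℝ) T)) :=
    hyc.aestronglyMeasurable hIccMeas
  have hz'm : AEStronglyMeasurable z' (volume.restrict (Icc (0:ℝ) T)) := by
    apply AEStronglyMeasurable.sub
    · exact ((hf.continuous.comp_continuousOn hxc).aestronglyMeasurable hIccMeas).add
        ((hmeas.aestronglyMeasurable).smul
          ((A.continuous.comp_continuousOn hxc).aestronglyMeasurable hIccMeas))
    · exact ((hf.continuous.comp_continuousOn hyc).aestronglyMeasurable hIccMeas).add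
        ((aestronglyMeasurable_const : AEStronglyMeasurable (fun _ : ℝ => pstar) _).smul
          ((A.continuous.comp_continuousOn hyc).aestronglyMeasurable hIccMeas))
  have hhm : AEStronglyMeasurable h (volume.restrict (Icc (0:ℝ) T)) := by
    apply aestronglyMeasurable_const.mul
    exact (((hmeas.sub measurable_const).abs).aestronglyMeasurable).mul
      (hyc.norm.aestronglyMeasurable hIccMeas)
  -- bounds
  obtain ⟨Cv, hCv⟩ : ∃ C, ∀ s ∈ Icc (0:ℝ) T, v s ≤ C :=
    (isCompact_Icc.bddAbove_image hvc).imp fun C hC s hs =>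
      hC (Set.mem_image_of_mem _ hs)
  obtain ⟨Cy, hCy⟩ : ∃ C, ∀ s ∈ Icc (0:ℝ) T, ‖y s‖ ≤ C :=
    (isCompact_Icc.bddAbove_image hyc.norm).imp fun C hC s hs =>
      hC (Set.mem_image_of_mem _ hs)
  have hhInt : IntegrableOn h (Icc (0:ℝ) T) := by
    apply Integrable.mono' (integrable_const (‖A‖ * ((M + |pstar|) * Cy))) hhm
    filter_upwards [ae_restrict_mem hIccMeas] with s hs
    rw [Real.norm_eq_abs, abs_of_nonneg (hh0 s)]
    have h1 : |p s - pstar| ≤ M + |pstar| :=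
      (abs_sub _ _).trans (by gcongr; exact hbd s hs)
    have h2 : ‖y s‖ ≤ Cy := hCy s hs
    have hp0 : (0:ℝ) ≤ M + |pstar| := by positivity
    show ‖A‖ * (|p s - pstar| * ‖y s‖) ≤ _
    exact mul_le_mul_of_nonneg_left
      (mul_le_mul h1 h2 (norm_nonneg _) hp0) (norm_nonneg _)
  have hz'Int : IntegrableOn z' (Icc (0:ℝ) T) := by
    apply Integrable.mono' (integrable_const (K * Cv + (‖A‖ * ((M + |pstar|) * Cy)))) hz'm
    filter_upwards [ae_restrict_mem hIccMeas] with s hs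
    refine (hbound s hs).trans ?_
    have h1 : |p s - pstar| ≤ M + |pstar| :=
      (abs_sub _ _).trans (by gcongr; exact hbd s hs)
    have h2 : ‖y s‖ ≤ Cy := hCy s hs
    have h3 : 0 ≤ Cy := le_trans (norm_nonneg _) h2
    have h4 : v s ≤ Cv := hCv s hs
    have h5 : h s ≤ ‖A‖ * ((M + |pstar|) * Cy) := by
      show ‖A‖ * (|p s - pstar| * ‖y s‖) ≤ _
      exact mul_le_mul_of_nonneg_left
        (mul_le_mul h1 h2 (norm_nonneg _) (by positivity)) (norm_nonneg _)
    exact add_le_add (mul_le_mul_of_nonneg_left h4 hK0) h5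
  -- main argument, for a fixed time t₀
  intro t₀ ht₀
  obtain ⟨ht₀0, ht₀T⟩ := ht₀
  have hvm : AEStronglyMeasurable v (volume.restrict (Icc (0:ℝ) T)) :=
    hvc.aestronglyMeasurable hIccMeas
  have hvInt : IntegrableOn v (Icc (0:ℝ) T) :=
    hvc.integrableOn_compact isCompact_Icc
  -- interval integrability on subintervals of [0, T]
  have hsub : ∀ t ∈ Icc (0:ℝ) t₀, Set.uIcc (0:ℝ) t ⊆ Icc (0:ℝ) T := by
    intro t ht
    rw [Set.uIcc_of_le ht.1]
    exact Set.Icc_subset_Icc le_rfl (ht.2.trans ht₀T)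
  have hz'I : ∀ t ∈ Icc (0:ℝ) t₀, IntervalIntegrable z' volume 0 t := fun t ht =>
    (hz'Int.mono_set (hsub t ht)).intervalIntegrable
  have hvI : ∀ t ∈ Icc (0:ℝ) t₀, IntervalIntegrable v volume 0 t := fun t ht =>
    (hvInt.mono_set (hsub t ht)).intervalIntegrable
  have hhI : ∀ t ∈ Icc (0:ℝ) t₀, IntervalIntegrable h volume 0 t := fun t ht =>
    (hhInt.mono_set (hsub t ht)).intervalIntegrable
  set W : ℝ → ℝ := fun t => ∫ s in (0:ℝ)..t, v s with hWdef
  set c : ℝ := ‖z 0‖ + ∫ s in (0:ℝ)..t₀, h s with hcdef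
  have ht₀mem : t₀ ∈ Icc (0:ℝ) t₀ := ⟨ht₀0, le_rfl⟩
  have hinth0 : 0 ≤ ∫ s in (0:ℝ)..t₀, h s :=
    intervalIntegral.integral_nonneg ht₀0 fun s _ => hh0 s
  have hc0 : 0 ≤ c := add_nonneg (norm_nonneg _) hinth0
  -- integral inequality: v t ≤ c + K * W t on [0, t₀]
  have hvW : ∀ t ∈ Icc (0:ℝ) t₀, v t ≤ c + K * W t := by
    intro t ht
    have htT : Icc (0:ℝ) t ⊆ Icc (0:ℝ) T := by
      exact Set.Icc_subset_Icc le_rfl (ht.2.trans ht₀T)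
    have hftc : ∫ s in (0:ℝ)..t, z' s = z t - z 0 := by
      apply intervalIntegral.integral_eq_sub_of_hasDerivAt
      · intro s hs
        exact hz s (htT (by rwa [Set.uIcc_of_le ht.1] at hs))
      · exact hz'I t ht
    have h1 : v t ≤ ‖z 0‖ + ‖∫ s in (0:ℝ)..t, z' s‖ := by
      calc v t = ‖z 0 + (z t - z 0)‖ := by rw [hvdef, add_sub_cancel]
        _ ≤ ‖z 0‖ + ‖z t - z 0‖ := norm_add_le _ _
        _ = ‖z 0‖ + ‖∫ s in (0:ℝ)..t, z' s‖ := by rw [hftc]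
    have h2 : ‖∫ s in (0:ℝ)..t, z' s‖ ≤ ∫ s in (0:ℝ)..t, (K * v s + h s) := by
      refine (intervalIntegral.norm_integral_le_integral_norm ht.1).trans ?_
      apply intervalIntegral.integral_mono_on ht.1 (hz'I t ht).norm
        (((hvI t ht).const_mul K).add (hhI t ht))
      intro s hs
      exact hbound s (htT hs)
    have h3 : ∫ s in (0:ℝ)..t, (K * v s + h s)
        = K * W t + ∫ s in (0:ℝ)..t, h s := by
      rw [intervalIntegral.integral_add ((hvI t ht).const_mul K) (hhI t ht),
        intervalIntegral.integral_const_mul]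
    have h4 : ∫ s in (0:ℝ)..t, h s ≤ ∫ s in (0:ℝ)..t₀, h s := by
      apply intervalIntegral.integral_mono_interval le_rfl ht.1 ht.2 _ (hhI t₀ ht₀mem)
      filter_upwards with s using hh0 s
    calc v t ≤ ‖z 0‖ + ‖∫ s in (0:ℝ)..t, z' s‖ := h1
      _ ≤ ‖z 0‖ + (K * W t + ∫ s in (0:ℝ)..t, h s) := by rw [← h3]; gcongr
      _ ≤ ‖z 0‖ + (K * W t + ∫ s in (0:ℝ)..t₀, h s) := by gcongr
      _ = c + K * W t := by rw [hcdef]; ring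
  -- W is nonnegative
  have hW0 : ∀ t ∈ Icc (0:ℝ) t₀, 0 ≤ W t := fun t ht =>
    intervalIntegral.integral_nonneg ht.1 fun s _ => norm_nonneg _
  -- Grönwall for W
  have hWc : ContinuousOn W (Icc (0:ℝ) t₀) := by
    have := intervalIntegral.continuousOn_primitive_interval' (hvI t₀ ht₀mem)
      Set.left_mem_uIcc
    rwa [Set.uIcc_of_le ht₀0] at this
  have hW' : ∀ t ∈ Ico (0:ℝ) t₀, HasDerivWithinAt W (v t) (Ici t) t := by
    intro t ht
    have htmem : t ∈ Icc (0:ℝ) T := ⟨ht.1, ht.2.le.trans ht₀T⟩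
    have htltT : t < T := lt_of_lt_of_le ht.2 ht₀T
    have hIccNhds : Icc (0:ℝ) T ∈ nhdsWithin t (Set.Ioi t) := by
      apply mem_nhdsWithin.2
      exact ⟨Set.Iio T, isOpen_Iio, htltT, fun u hu =>
        ⟨le_trans ht.1 (le_of_lt hu.2), le_of_lt hu.1⟩⟩
    exact intervalIntegral.integral_hasDerivWithinAt_right
      (hvI t ⟨ht.1, ht.2.le⟩) ⟨Icc (0:ℝ) T, hIccNhds, hvm⟩
      ((hvc t htmem).mono_of_mem_nhdsWithin hIccNhds)
  have hgron := norm_le_gronwallBound_of_norm_deriv_right_le (δ := 0) (K := K) (ε := c) hWc hW'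
    (by simp [hWdef]) (fun t ht => by
      rw [Real.norm_eq_abs, Real.norm_eq_abs, abs_of_nonneg (norm_nonneg _),
        abs_of_nonneg (hW0 t ⟨ht.1, ht.2.le⟩)]
      have := hvW t ⟨ht.1, ht.2.le⟩
      linarith) t₀ ⟨ht₀0, le_rfl⟩
  rw [sub_zero] at hgron
  rw [Real.norm_eq_abs, abs_of_nonneg (hW0 t₀ ht₀mem)] at hgron
  -- conclude
  have hfinal : v t₀ ≤ c * Real.exp (K * t₀) := by
    have h5 : v t₀ ≤ c + K * W t₀ := hvW t₀ ht₀mem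
    have h6 : c + K * W t₀ ≤ c + K * gronwallBound 0 K c t₀ := by
      have := mul_le_mul_of_nonneg_left hgron hK0; linarith
    refine h5.trans (h6.trans ?_)
    rcases eq_or_ne K 0 with hKz | hKz
    · simp [hKz, gronwallBound_K0]
    · rw [gronwallBound_of_K_ne_0 hKz]
      have heq : K * (0 * Real.exp (K * t₀) + c / K * (Real.exp (K * t₀) - 1))
          = c * Real.exp (K * t₀) - c := by
        field_simp; ring
      linarith [heq]
  have hcrw : c = ‖x 0 - y 0‖ + ‖A‖ * ∫ s in (0:ℝ)..t₀, |p s - pstar| * ‖y s‖ := by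
    rw [hcdef, hzdef]
    congr 1
    rw [hhdef, intervalIntegral.integral_const_mul]
  calc ‖x t₀ - y t₀‖ = v t₀ := rfl
    _ ≤ c * Real.exp (K * t₀) := hfinal
    _ = Real.exp (K * t₀) * (‖x 0 - y 0‖ + ‖A‖ * ∫ s in (0:ℝ)..t₀, |p s - pstar| * ‖y s‖) := by
        rw [hcrw]; ring
end
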